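/- arXiv:1002.1583 — 13 statements merged into one kernel-verified Lean document; each statement's English description precedes it below -/
import Mathlib

section
/- Let T_0 be the set of positions of the s_0 largest coefficients of β in absolute value and A_0 = {j : |β_j| > λσ} with a_0 = |A_0| ≤ s_0. Then for every c' > 1/2, the number of indices j outside T_0 with |β_j| ≥ λσ/√(2c') is at most (2c'−1)(s_0 − a_0). -/
set_option maxHeartbeats 1000000

lemma card_filter_val_lt (p n : ℕ) (h : n ≤ p) :
    (Finset.univ.filter (fun j : Fin p => (j : ℕ) < n)).card = n := by
  have heq : Finset.univ.filter (fun j : Fin p => (j : ℕ) < n)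
      = Finset.map (Fin.castLEEmb h) Finset.univ := by
    ext j
    simp only [Finset.mem_filter, Finset.mem_univ, true_and, Finset.mem_map,
      Fin.castLEEmb_apply]
    constructor
    · intro hj; exact ⟨⟨j, hj⟩, rfl⟩
    · rintro ⟨i, rfl⟩; exact i.isLt
  rw [heq, Finset.card_map, Finset.card_univ, Fintype.card_fin]

/-- For every c' > 1/2, the number of indices outside T0 with
|β_j| ≥ λσ/√(2c') is at most (2c'-1)(s0 - a0). -/
theorem stmt1 (p : ℕ) (β : Fin p → ℝ) (lam σ : ℝ) (hlam : 0 < lam) (hσ : 0 < σ)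
    (hord : ∀ i j : Fin p, i ≤ j → |β j| ≤ |β i|)
    (s0 a0 : ℕ) (ha0 : a0 ≤ s0)
    (hs0 : ∑ i, min ((β i) ^ 2) (lam ^ 2 * σ ^ 2) ≤ (s0 : ℝ) * lam ^ 2 * σ ^ 2)
    (hA0 : ∀ j : Fin p, lam * σ < |β j| ↔ (j : ℕ) < a0)
    (T0 : Finset (Fin p)) (hT0 : ∀ j, j ∈ T0 ↔ (j : ℕ) < s0)
    (c' : ℝ) (hc' : 1 / 2 < c')
    (J : Finset (Fin p))
    (hJ : ∀ j, j ∈ J ↔ (j ∉ T0 ∧ lam * σ / Real.sqrt (2 * c') ≤ |β j|)) :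
    (J.card : ℝ) ≤ (2 * c' - 1) * ((s0 : ℝ) - (a0 : ℝ)) := by
  rcases J.eq_empty_or_nonempty with hJe | ⟨j₀, hj₀⟩
  · have h1 : (a0 : ℝ) ≤ (s0 : ℝ) := Nat.cast_le.mpr ha0
    simp only [hJe, Finset.card_empty, Nat.cast_zero]
    nlinarith
  · obtain ⟨hj₀T, hj₀β⟩ := (hJ j₀).mp hj₀
    have hs0j : s0 ≤ (j₀ : ℕ) := by
      by_contra h
      exact hj₀T ((hT0 j₀).mpr (by omega))
    have hs0p : s0 ≤ p := le_trans hs0j j₀.isLt.le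
    have ha0p : a0 ≤ p := le_trans ha0 hs0p
    set L := lam * σ with hLdef
    have hL : 0 < L := mul_pos hlam hσ
    have h2c : (1 : ℝ) < 2 * c' := by linarith
    have h2cpos : (0 : ℝ) < 2 * c' := by linarith
    have hsq : Real.sqrt (2 * c') ^ 2 = 2 * c' := Real.sq_sqrt h2cpos.le
    have hsqrtpos : 0 < Real.sqrt (2 * c') := Real.sqrt_pos.mpr h2cpos
    have hsqrt1 : 1 ≤ Real.sqrt (2 * c') := by nlinarith
    set t := L / Real.sqrt (2 * c') with htdef
    have ht : 0 < t := div_pos hL hsqrtpos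
    have htL : t ≤ L := by
      rw [htdef, div_le_iff₀ hsqrtpos]; nlinarith
    have ht2 : t ^ 2 = L ^ 2 / (2 * c') := by
      rw [htdef, div_pow, hsq]
    have hL2 : lam ^ 2 * σ ^ 2 = L ^ 2 := by rw [hLdef]; ring
    set f : Fin p → ℝ := fun i => min ((β i) ^ 2) (lam ^ 2 * σ ^ 2) with hfdef
    have hf_nonneg : ∀ i : Fin p, 0 ≤ f i := fun i =>
      le_min (sq_nonneg _) (by positivity)
    -- pointwise bounds
    have hAbd : ∀ i : Fin p, (i : ℕ) < a0 → L ^ 2 ≤ f i := by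
      intro i hi
      have h1 : L < |β i| := (hA0 i).mpr hi
      have h2 : L ^ 2 ≤ (β i) ^ 2 := by nlinarith [sq_abs (β i), h1, hL.le]
      exact le_min h2 (le_of_eq hL2.symm)
    have hBbd : ∀ i : Fin p, (i : ℕ) ≤ (j₀ : ℕ) → t ^ 2 ≤ f i := by
      intro i hi
      have h1 : |β j₀| ≤ |β i| := hord i j₀ hi
      have h2 : t ≤ |β i| := le_trans hj₀β h1
      have h3 : t ^ 2 ≤ (β i) ^ 2 := by nlinarith [sq_abs (β i), h2, ht.le]
      exact le_min h3 (by rw [hL2]; nlinarith [htL, ht.le])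
    have hJbd : ∀ j ∈ J, t ^ 2 ≤ f j := by
      intro j hj
      obtain ⟨_, hjβ⟩ := (hJ j).mp hj
      have h3 : t ^ 2 ≤ (β j) ^ 2 := by nlinarith [sq_abs (β j), hjβ, ht.le]
      exact le_min h3 (by rw [hL2]; nlinarith [htL, ht.le])
    -- set decompositions
    set A : Finset (Fin p) := Finset.univ.filter (fun j : Fin p => (j : ℕ) < a0) with hAdef
    have hT0eq : T0 = Finset.univ.filter (fun j : Fin p => (j : ℕ) < s0) := by
      ext j; simp [hT0 j]
    have hAsub : A ⊆ T0 := by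
      intro j hj
      rw [hAdef, Finset.mem_filter] at hj
      exact (hT0 j).mpr (lt_of_lt_of_le hj.2 ha0)
    have hAcard : A.card = a0 := card_filter_val_lt p a0 ha0p
    have hT0card : T0.card = s0 := by rw [hT0eq]; exact card_filter_val_lt p s0 hs0p
    have hBcard : (T0 \ A).card = s0 - a0 := by
      rw [Finset.card_sdiff_of_subset hAsub, hAcard, hT0card]
    have hdisj : Disjoint T0 J := by
      rw [Finset.disjoint_left]
      intro j hjT0 hjJ
      exact ((hJ j).mp hjJ).1 hjT0
    -- sum bounds
    have hsumA : (a0 : ℝ) * L ^ 2 ≤ ∑ i ∈ A, f i := by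
      have := Finset.card_nsmul_le_sum A f (L ^ 2) (fun i hi => by
        rw [hAdef, Finset.mem_filter] at hi; exact hAbd i hi.2)
      rwa [hAcard, nsmul_eq_mul] at this
    have hsumB : ((s0 - a0 : ℕ) : ℝ) * t ^ 2 ≤ ∑ i ∈ T0 \ A, f i := by
      have := Finset.card_nsmul_le_sum (T0 \ A) f (t ^ 2) (fun i hi => by
        have hiT0 := (Finset.mem_sdiff.mp hi).1
        have : (i : ℕ) < s0 := (hT0 i).mp hiT0
        exact hBbd i (le_trans this.le hs0j))
      rwa [hBcard, nsmul_eq_mul] at this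
    have hsumJ : (J.card : ℝ) * t ^ 2 ≤ ∑ j ∈ J, f j := by
      have := Finset.card_nsmul_le_sum J f (t ^ 2) hJbd
      rwa [nsmul_eq_mul] at this
    have hT0split : ∑ i ∈ T0 \ A, f i + ∑ i ∈ A, f i = ∑ i ∈ T0, f i :=
      Finset.sum_sdiff hAsub
    have hunion : ∑ i ∈ T0, f i + ∑ j ∈ J, f j ≤ ∑ i, f i := by
      rw [← Finset.sum_union hdisj]
      exact Finset.sum_le_sum_of_subset_of_nonneg (Finset.subset_univ _)
        (fun i _ _ => hf_nonneg i)
    have htot : ∑ i, f i ≤ (s0 : ℝ) * L ^ 2 := by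
      calc ∑ i, f i ≤ (s0 : ℝ) * lam ^ 2 * σ ^ 2 := hs0
        _ = (s0 : ℝ) * L ^ 2 := by rw [hLdef]; ring
    have hkey : (a0 : ℝ) * L ^ 2 + ((s0 - a0 : ℕ) : ℝ) * t ^ 2 + (J.card : ℝ) * t ^ 2
        ≤ (s0 : ℝ) * L ^ 2 := by linarith
    have hcast : ((s0 - a0 : ℕ) : ℝ) = (s0 : ℝ) - (a0 : ℝ) := by
      rw [Nat.cast_sub ha0]
    rw [hcast] at hkey
    have hu : (0 : ℝ) ≤ (s0 : ℝ) - (a0 : ℝ) := by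
      have h : (a0 : ℝ) ≤ (s0 : ℝ) := Nat.cast_le.mpr ha0; linarith
    have hL2pos : (0 : ℝ) < L ^ 2 := by positivity
    rw [ht2] at hkey
    -- from hkey: a0*L² + (u + J)*L²/(2c') ≤ (a0+u)*L²  where u = s0-a0
    have hmul : ((s0 : ℝ) - a0 + (J.card : ℝ)) * L ^ 2 ≤ 2 * c' * ((s0 : ℝ) - a0) * L ^ 2 := by
      have h := mul_le_mul_of_nonneg_right hkey h2cpos.le
      have hne : (2 * c') ≠ 0 := ne_of_gt h2cpos
      field_simp at h
      nlinarith [h]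
    have hfin : (s0 : ℝ) - a0 + (J.card : ℝ) ≤ 2 * c' * ((s0 : ℝ) - a0) :=
      le_of_mul_le_mul_right hmul hL2pos
    linarith
end

section
/- Suppose the restricted smallest and largest sparse eigenvalues satisfy Λ_min(2s)·n‖υ‖² ≤ ‖Xυ‖² ≤ Λ_max(2s)·n‖υ‖² for all 2s-sparse υ. Then for all disjoint sets I, S_D ⊆ {1,...,p} with |I| + |S_D| ≤ 2s, and all vectors c supported on I, c' supported on S_D, we have |⟨X c, X c'⟩| / n ≤ ((Λ_max(2s) − Λ_min(2s))/2)·‖c‖₂‖c'‖₂. -/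
/-- Restricted orthogonality bound from restricted eigenvalue bounds. -/
theorem stmt2 (n p s : ℕ) (X : Matrix (Fin n) (Fin p) ℝ) (Λmin Λmax : ℝ)
    (hn : 0 < n)
    (hRE : ∀ (v : Fin p → ℝ) (T : Finset (Fin p)), T.card ≤ 2 * s →
      (∀ j ∉ T, v j = 0) →
      Λmin * n * (∑ j, (v j) ^ 2) ≤ ∑ i, (X.mulVec v i) ^ 2 ∧
      (∑ i, (X.mulVec v i) ^ 2) ≤ Λmax * n * (∑ j, (v j) ^ 2))
    (I SD : Finset (Fin p)) (hdisj : Disjoint I SD)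
    (hcard : I.card + SD.card ≤ 2 * s)
    (c c' : Fin p → ℝ) (hc : ∀ j ∉ I, c j = 0) (hc' : ∀ j ∉ SD, c' j = 0) :
    |∑ i, (X.mulVec c i) * (X.mulVec c' i)| / n ≤
      (Λmax - Λmin) / 2 * Real.sqrt (∑ j, (c j) ^ 2) * Real.sqrt (∑ j, (c' j) ^ 2) := by
  have key : ∀ u u' : Fin p → ℝ, (∀ j ∉ I, u j = 0) → (∀ j ∉ SD, u' j = 0) →
      |∑ i, (X.mulVec u i) * (X.mulVec u' i)| ≤
        (Λmax - Λmin) * n / 4 * ((∑ j, (u j) ^ 2) + ∑ j, (u' j) ^ 2) := by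
    intro u u' hu hu'
    have hT : (I ∪ SD).card ≤ 2 * s :=
      le_trans (Finset.card_union_le I SD) hcard
    have hsp : ∀ j ∉ I ∪ SD, (u + u') j = 0 := by
      intro j hj
      simp only [Finset.mem_union, not_or] at hj
      simp [hu j hj.1, hu' j hj.2]
    have hsm : ∀ j ∉ I ∪ SD, (u - u') j = 0 := by
      intro j hj
      simp only [Finset.mem_union, not_or] at hj
      simp [hu j hj.1, hu' j hj.2]
    have h1 := hRE (u + u') (I ∪ SD) hT hsp
    have h2 := hRE (u - u') (I ∪ SD) hT hsm
    have hcross : ∑ j, u j * u' j = 0 := by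
      apply Finset.sum_eq_zero
      intro j _
      by_cases hj : j ∈ I
      · have : j ∉ SD := fun h => (Finset.disjoint_left.mp hdisj hj) h
        simp [hu' j this]
      · simp [hu j hj]
    have hSp : ∑ j, ((u + u') j) ^ 2 = (∑ j, (u j) ^ 2) + ∑ j, (u' j) ^ 2 := by
      have : ∀ j, ((u + u') j) ^ 2 = (u j) ^ 2 + 2 * (u j * u' j) + (u' j) ^ 2 := by
        intro j; simp [Pi.add_apply]; ring
      simp only [this, Finset.sum_add_distrib, ← Finset.mul_sum, hcross]
      ring
    have hSm : ∑ j, ((u - u') j) ^ 2 = (∑ j, (u j) ^ 2) + ∑ j, (u' j) ^ 2 := by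
      have : ∀ j, ((u - u') j) ^ 2 = (u j) ^ 2 - 2 * (u j * u' j) + (u' j) ^ 2 := by
        intro j; simp [Pi.sub_apply]; ring
      simp only [this, Finset.sum_add_distrib, Finset.sum_sub_distrib, ← Finset.mul_sum, hcross]
      ring
    have hXp : ∑ i, (X.mulVec (u + u') i) ^ 2 =
        (∑ i, (X.mulVec u i) ^ 2) + 2 * (∑ i, (X.mulVec u i) * (X.mulVec u' i))
          + ∑ i, (X.mulVec u' i) ^ 2 := by
      have : ∀ i, (X.mulVec (u + u') i) ^ 2 = (X.mulVec u i) ^ 2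
          + 2 * ((X.mulVec u i) * (X.mulVec u' i)) + (X.mulVec u' i) ^ 2 := by
        intro i
        have hv : X.mulVec (u + u') i = X.mulVec u i + X.mulVec u' i := by
          simp [Matrix.mulVec_add]
        rw [hv]; ring
      simp only [this, Finset.sum_add_distrib, ← Finset.mul_sum]
    have hXm : ∑ i, (X.mulVec (u - u') i) ^ 2 =
        (∑ i, (X.mulVec u i) ^ 2) - 2 * (∑ i, (X.mulVec u i) * (X.mulVec u' i))
          + ∑ i, (X.mulVec u' i) ^ 2 := by
      have : ∀ i, (X.mulVec (u - u') i) ^ 2 = (X.mulVec u i) ^ 2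
          - 2 * ((X.mulVec u i) * (X.mulVec u' i)) + (X.mulVec u' i) ^ 2 := by
        intro i
        have hv : X.mulVec (u - u') i = X.mulVec u i - X.mulVec u' i := by
          simp [Matrix.mulVec_sub]
        rw [hv]; ring
      simp only [this, Finset.sum_add_distrib, Finset.sum_sub_distrib, ← Finset.mul_sum]
    obtain ⟨h1l, h1r⟩ := h1
    obtain ⟨h2l, h2r⟩ := h2
    rw [hSp, hXp] at h1l h1r
    rw [hSm, hXm] at h2l h2r
    rw [abs_le]
    constructor <;> nlinarith [h1l, h1r, h2l, h2r]
  set a := Real.sqrt (∑ j, (c j) ^ 2) with ha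
  set b := Real.sqrt (∑ j, (c' j) ^ 2) with hb
  have hsum1 : (0:ℝ) ≤ ∑ j, (c j) ^ 2 := Finset.sum_nonneg fun j _ => sq_nonneg _
  have hsum2 : (0:ℝ) ≤ ∑ j, (c' j) ^ 2 := Finset.sum_nonneg fun j _ => sq_nonneg _
  by_cases h0 : (∑ j, (c j) ^ 2) = 0
  · have hc0 : ∀ j, c j = 0 := by
      intro j
      have := (Finset.sum_eq_zero_iff_of_nonneg (fun j _ => sq_nonneg (c j))).mp h0 j
        (Finset.mem_univ j)
      exact pow_eq_zero_iff (n := 2) (by norm_num) |>.mp this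
    have hceq : c = 0 := funext hc0
    simp [ha, h0, hceq]
  by_cases h0' : (∑ j, (c' j) ^ 2) = 0
  · have hc0 : ∀ j, c' j = 0 := by
      intro j
      have := (Finset.sum_eq_zero_iff_of_nonneg (fun j _ => sq_nonneg (c' j))).mp h0' j
        (Finset.mem_univ j)
      exact pow_eq_zero_iff (n := 2) (by norm_num) |>.mp this
    have hceq : c' = 0 := funext hc0
    simp [hb, h0', hceq]
  have hs1 : (0:ℝ) < ∑ j, (c j) ^ 2 := lt_of_le_of_ne hsum1 (Ne.symm h0)
  have hs2 : (0:ℝ) < ∑ j, (c' j) ^ 2 := lt_of_le_of_ne hsum2 (Ne.symm h0')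
  have hapos : 0 < a := Real.sqrt_pos.mpr hs1
  have hbpos : 0 < b := Real.sqrt_pos.mpr hs2
  have ha2 : a ^ 2 = ∑ j, (c j) ^ 2 := Real.sq_sqrt hsum1
  have hb2 : b ^ 2 = ∑ j, (c' j) ^ 2 := Real.sq_sqrt hsum2
  -- apply key to b • c and a • c'
  have hsc : ∀ j ∉ I, (b • c) j = 0 := fun j hj => by simp [hc j hj]
  have hsc' : ∀ j ∉ SD, (a • c') j = 0 := fun j hj => by simp [hc' j hj]
  have hk := key (b • c) (a • c') hsc hsc'
  have hmv1 : ∀ i, X.mulVec (b • c) i = b * X.mulVec c i := by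
    intro i; rw [Matrix.mulVec_smul]; simp
  have hmv2 : ∀ i, X.mulVec (a • c') i = a * X.mulVec c' i := by
    intro i; rw [Matrix.mulVec_smul]; simp
  have e1 : ∑ i, (X.mulVec (b • c) i) * (X.mulVec (a • c') i)
      = a * b * ∑ i, (X.mulVec c i) * (X.mulVec c' i) := by
    rw [Finset.mul_sum]
    apply Finset.sum_congr rfl
    intro i _
    rw [hmv1 i, hmv2 i]; ring
  have e2 : ∑ j, ((b • c) j) ^ 2 = b ^ 2 * ∑ j, (c j) ^ 2 := by
    rw [Finset.mul_sum]; apply Finset.sum_congr rfl; intro j _; simp; ring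
  have e3 : ∑ j, ((a • c') j) ^ 2 = a ^ 2 * ∑ j, (c' j) ^ 2 := by
    rw [Finset.mul_sum]; apply Finset.sum_congr rfl; intro j _; simp; ring
  rw [e1, e2, e3, abs_mul, abs_of_pos (mul_pos hapos hbpos)] at hk
  have hnpos : (0:ℝ) < n := Nat.cast_pos.mpr hn
  rw [div_le_iff₀ hnpos]
  have hab : 0 < a * b := mul_pos hapos hbpos
  rw [← ha2, ← hb2] at hk
  exact le_of_mul_le_mul_left (hk.trans_eq (by ring)) hab
end

section
/- If Y = Xβ + ε with supp(β) ⊆ I, |I| ≤ 2s, the Gram matrix satisfies Λ_min(|I|) > 0, and ‖Xᵀε/n‖_∞ ≤ λ_{σ,a,p}, then the OLS estimator β̂_I = (X_Iᵀ X_I)^{-1} X_Iᵀ Y satisfies ‖β̂_I − β_I‖₂ ≤ λ_{σ,a,p} √|I| / Λ_min(|I|). -/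
/-- ℓ2 loss of the OLS estimator when the chosen model I contains supp(β). -/
theorem stmt4 (n p s : ℕ) (X : Matrix (Fin n) (Fin p) ℝ) (Y : Fin n → ℝ)
    (β : Fin p → ℝ) (ε : Fin n → ℝ) (hε : ∀ i, ε i = Y i - X.mulVec β i)
    (I : Finset (Fin p)) (hβsupp : ∀ j ∉ I, β j = 0) (hIcard : I.card ≤ 2 * s)
    (Λmin lam : ℝ) (hΛmin : 0 < Λmin) (hlam : 0 < lam) (hn : 0 < n)
    (hRE : ∀ v : Fin p → ℝ, (∀ j ∉ I, v j = 0) →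
      Λmin * n * (∑ j, (v j) ^ 2) ≤ ∑ i, (X.mulVec v i) ^ 2)
    (hnoise : ∀ j, |∑ i, X i j * ε i| / n ≤ lam)
    (βhat : Fin p → ℝ) (hβhatsupp : ∀ j ∉ I, βhat j = 0)
    (hnormal : ∀ j ∈ I, ∑ i, X i j * (Y i - X.mulVec βhat i) = 0) :
    Real.sqrt (∑ j, (βhat j - β j) ^ 2) ≤ lam * Real.sqrt (I.card : ℝ) / Λmin := by
  set v : Fin p → ℝ := fun j => βhat j - β j with hv
  have hvsupp : ∀ j ∉ I, v j = 0 := fun j hj => by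
    simp [hv, hβsupp j hj, hβhatsupp j hj]
  set T := ∑ j, v j ^ 2 with hT
  have hT0 : (0:ℝ) ≤ T := Finset.sum_nonneg fun j _ => sq_nonneg _
  have hsT0 : 0 ≤ Real.sqrt T := Real.sqrt_nonneg _
  have hn' : (0:ℝ) < n := by exact_mod_cast hn
  -- normal equations rewritten
  have hkey : ∀ j ∈ I, ∑ i, X i j * X.mulVec v i = ∑ i, X i j * ε i := by
    intro j hj
    have h := hnormal j hj
    have hmv : ∀ i, X.mulVec v i = X.mulVec βhat i - X.mulVec β i := by
      intro i
      simp [Matrix.mulVec, dotProduct, hv, mul_sub, Finset.sum_sub_distrib]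
    calc ∑ i, X i j * X.mulVec v i
        = (∑ i, X i j * ε i) - ∑ i, X i j * (Y i - X.mulVec βhat i) := by
          rw [← Finset.sum_sub_distrib]
          refine Finset.sum_congr rfl fun i _ => ?_
          rw [hmv i, hε i]; ring
      _ = ∑ i, X i j * ε i := by rw [h]; ring
  -- quadratic form identity
  have hS : ∑ j, v j * ∑ i, X i j * X.mulVec v i = ∑ i, (X.mulVec v i) ^ 2 := by
    simp_rw [Finset.mul_sum]
    rw [Finset.sum_comm]
    refine Finset.sum_congr rfl fun i _ => ?_
    rw [sq, Matrix.mulVec, dotProduct, Finset.sum_mul]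
    exact Finset.sum_congr rfl fun j _ => by ring
  -- bound on the cross term
  have hbound : ∑ j, v j * ∑ i, X i j * X.mulVec v i
      ≤ lam * n * Real.sqrt (I.card : ℝ) * Real.sqrt T := by
    have h1 : ∑ j, v j * ∑ i, X i j * X.mulVec v i
        = ∑ j ∈ I, v j * ∑ i, X i j * ε i := by
      rw [← Finset.sum_subset (Finset.subset_univ I)
        (fun j _ hj => by rw [hvsupp j hj, zero_mul])]
      exact Finset.sum_congr rfl fun j hj => by rw [hkey j hj]
    rw [h1]
    have h2 : ∑ j ∈ I, v j * ∑ i, X i j * ε i ≤ ∑ j ∈ I, |v j| * (lam * n) := by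
      refine Finset.sum_le_sum fun j _ => ?_
      have := hnoise j
      have hle : |∑ i, X i j * ε i| ≤ lam * n := by
        rw [div_le_iff₀ hn'] at this; linarith
      calc v j * ∑ i, X i j * ε i ≤ |v j * ∑ i, X i j * ε i| := le_abs_self _
        _ = |v j| * |∑ i, X i j * ε i| := abs_mul _ _
        _ ≤ |v j| * (lam * n) := by
            exact mul_le_mul_of_nonneg_left hle (abs_nonneg _)
    refine h2.trans ?_
    rw [← Finset.sum_mul]
    have hcs : ∑ j ∈ I, |v j| ≤ Real.sqrt (I.card : ℝ) * Real.sqrt T := by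
      have h3 : (∑ j ∈ I, |v j|) ^ 2 ≤ (I.card : ℝ) * T := by
        have := Finset.sum_mul_sq_le_sq_mul_sq I (fun _ => (1:ℝ)) (fun j => |v j|)
        simp only [one_mul, one_pow, sq_abs] at this
        have hsub : ∑ j ∈ I, v j ^ 2 ≤ T := by
          rw [hT]
          exact Finset.sum_le_sum_of_subset_of_nonneg (Finset.subset_univ I)
            (fun j _ _ => sq_nonneg _)
        calc (∑ j ∈ I, |v j|) ^ 2 ≤ (∑ j ∈ I, (1:ℝ)) * ∑ j ∈ I, v j ^ 2 := by
              simpa using this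
          _ ≤ (I.card : ℝ) * T := by
              simp only [Finset.sum_const, nsmul_eq_mul, mul_one]
              exact mul_le_mul_of_nonneg_left hsub (by positivity)
      have h4 : ∑ j ∈ I, |v j| ≤ Real.sqrt ((I.card : ℝ) * T) := by
        rw [← Real.sqrt_sq (Finset.sum_nonneg fun j _ => abs_nonneg _)]
        exact Real.sqrt_le_sqrt h3
      rwa [Real.sqrt_mul (by positivity)] at h4
    calc (∑ j ∈ I, |v j|) * (lam * n)
        ≤ (Real.sqrt (I.card : ℝ) * Real.sqrt T) * (lam * n) :=
          mul_le_mul_of_nonneg_right hcs (by positivity)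
      _ = lam * n * Real.sqrt (I.card : ℝ) * Real.sqrt T := by ring
  have hre := hRE v hvsupp
  have hmain : Λmin * n * T ≤ lam * n * Real.sqrt (I.card : ℝ) * Real.sqrt T := by
    calc Λmin * n * T ≤ ∑ i, (X.mulVec v i) ^ 2 := hre
      _ = ∑ j, v j * ∑ i, X i j * X.mulVec v i := hS.symm
      _ ≤ _ := hbound
  have hTsq : T = Real.sqrt T * Real.sqrt T := (Real.mul_self_sqrt hT0).symm
  rcases eq_or_lt_of_le hsT0 with h0 | h0
  · rw [← h0]; exact div_nonneg (mul_nonneg hlam.le (Real.sqrt_nonneg _)) hΛmin.le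
  · rw [le_div_iff₀ hΛmin]
    have : Λmin * n * (Real.sqrt T * Real.sqrt T)
        ≤ lam * n * Real.sqrt (I.card : ℝ) * Real.sqrt T := by rw [← hTsq]; exact hmain
    have h6 : ((n:ℝ) * Real.sqrt T) * (Real.sqrt T * Λmin)
        ≤ ((n:ℝ) * Real.sqrt T) * (lam * Real.sqrt (I.card : ℝ)) := by
      linear_combination this
    exact le_of_mul_le_mul_left h6 (mul_pos hn' h0)
end

section
/- OLS with missing variables: suppose Y = Xβ + ε, I ⊆ {1,...,p}, S_D = supp(β) \ I with I ∩ S_D = ∅ and |I ∪ S_D| ≤ 2s. If the restricted eigenvalue bounds hold and ‖Xᵀε/n‖_∞ ≤ λ_{σ,a,p}, then for β̂_I = (X_Iᵀ X_I)^{-1} X_Iᵀ Y (extended by zero outside I), ‖β̂_I − β‖₂² ≤ (θ_{|I|,|S_D|}·‖β_{S_D}‖₂ + λ_{σ,a,p}·√|I|)² / Λ_min(|I|)² + ‖β_{S_D}‖₂². -/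
/-- ℓ2 loss of the OLS estimator with missing relevant variables. -/
theorem stmt5 (n p s : ℕ) (X : Matrix (Fin n) (Fin p) ℝ) (Y : Fin n → ℝ)
    (β : Fin p → ℝ) (ε : Fin n → ℝ) (hε : ∀ i, ε i = Y i - X.mulVec β i)
    (I SD : Finset (Fin p)) (hSD : ∀ j, j ∈ SD ↔ (β j ≠ 0 ∧ j ∉ I))
    (hcard : (I ∪ SD).card ≤ 2 * s)
    (θ Λmin lam : ℝ) (hΛmin : 0 < Λmin) (hlam : 0 < lam) (hθ0 : 0 ≤ θ) (hn : 0 < n)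
    (hRE : ∀ v : Fin p → ℝ, (∀ j ∉ I, v j = 0) →
      Λmin * n * (∑ j, (v j) ^ 2) ≤ ∑ i, (X.mulVec v i) ^ 2)
    (hθ : ∀ u v : Fin p → ℝ, (∀ j ∉ I, u j = 0) → (∀ j ∉ SD, v j = 0) →
      |∑ i, (X.mulVec u i) * (X.mulVec v i)| ≤
        θ * n * Real.sqrt (∑ j, (u j) ^ 2) * Real.sqrt (∑ j, (v j) ^ 2))
    (hnoise : ∀ j, |∑ i, X i j * ε i| / n ≤ lam)
    (βhat : Fin p → ℝ) (hβhatsupp : ∀ j ∉ I, βhat j = 0)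
    (hnormal : ∀ j ∈ I, ∑ i, X i j * (Y i - X.mulVec βhat i) = 0) :
    ∑ j, (βhat j - β j) ^ 2 ≤
      (θ * Real.sqrt (∑ j ∈ SD, (β j) ^ 2) + lam * Real.sqrt (I.card : ℝ)) ^ 2
        / Λmin ^ 2 + ∑ j ∈ SD, (β j) ^ 2 := by
  classical
  set u : Fin p → ℝ := fun j => if j ∈ I then βhat j - β j else 0 with hu
  set v : Fin p → ℝ := fun j => if j ∈ SD then β j else 0 with hv
  have hIS : ∀ j, j ∈ I → j ∉ SD := fun j hj hj' => ((hSD j).1 hj').2 hj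
  have husupp : ∀ j ∉ I, u j = 0 := fun j hj => by simp [hu, hj]
  have hvsupp : ∀ j ∉ SD, v j = 0 := fun j hj => by simp [hv, hj]
  have hdiff : ∀ j, βhat j - β j = u j - v j := by
    intro j
    by_cases hjI : j ∈ I
    · simp [hu, hv, hjI, hIS j hjI]
    · by_cases hjS : j ∈ SD
      · simp [hu, hv, hjI, hjS, hβhatsupp j hjI]
      · have hβ0 : β j = 0 := by
          by_contra h
          exact hjS ((hSD j).2 ⟨h, hjI⟩)
        simp [hu, hv, hjI, hjS, hβhatsupp j hjI, hβ0]
  have hsplit : ∑ j, (βhat j - β j) ^ 2 = (∑ j, u j ^ 2) + ∑ j, v j ^ 2 := by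
    rw [← Finset.sum_add_distrib]
    apply Finset.sum_congr rfl
    intro j _
    rw [hdiff j]
    have h0 : u j * v j = 0 := by
      by_cases hjI : j ∈ I
      · simp [hv, hIS j hjI]
      · simp [hu, hjI]
    ring_nf
    nlinarith [h0]
  have hvsum : ∑ j, v j ^ 2 = ∑ j ∈ SD, β j ^ 2 := by
    rw [← Finset.sum_subset (Finset.subset_univ SD)]
    · exact Finset.sum_congr rfl (fun j hj => by simp [hv, hj])
    · intro j _ hj; simp [hv, hj]
  -- swap lemma
  have hswap : ∀ (c : Fin p → ℝ) (w : Fin n → ℝ),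
      ∑ i, X.mulVec c i * w i = ∑ j, c j * ∑ i, X i j * w i := by
    intro c w
    simp only [Matrix.mulVec, dotProduct, Finset.sum_mul, Finset.mul_sum]
    rw [Finset.sum_comm]
    exact Finset.sum_congr rfl fun j _ => Finset.sum_congr rfl fun i _ => by ring
  -- residual identity
  have hr : ∀ i, Y i - X.mulVec βhat i = ε i - X.mulVec u i + X.mulVec v i := by
    intro i
    have h1 : X.mulVec (βhat - β) i = X.mulVec u i - X.mulVec v i := by
      have he : (βhat - β) = (u - v) := funext fun j => by
        simpa [Pi.sub_apply] using hdiff j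
      rw [he, Matrix.mulVec_sub]; simp
    have h2 : X.mulVec (βhat - β) i = X.mulVec βhat i - X.mulVec β i := by
      rw [Matrix.mulVec_sub]; simp
    have h3 := hε i
    rw [h1] at h2
    linarith
  -- normal equations give orthogonality
  have horth : ∑ i, X.mulVec u i * (Y i - X.mulVec βhat i) = 0 := by
    rw [hswap]
    apply Finset.sum_eq_zero
    intro j _
    by_cases hjI : j ∈ I
    · rw [hnormal j hjI]; ring
    · rw [husupp j hjI]; ring
  have hkey : ∑ i, X.mulVec u i ^ 2 =
      (∑ j, u j * ∑ i, X i j * ε i) + ∑ i, X.mulVec u i * X.mulVec v i := by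
    have h1 : ∑ i, X.mulVec u i * (ε i - X.mulVec u i + X.mulVec v i) = 0 := by
      rw [← horth]
      exact Finset.sum_congr rfl fun i _ => by rw [hr i]
    have h2 : ∑ i, X.mulVec u i * (ε i - X.mulVec u i + X.mulVec v i) =
        (∑ i, X.mulVec u i * ε i) - (∑ i, X.mulVec u i ^ 2) +
          ∑ i, X.mulVec u i * X.mulVec v i := by
      rw [← Finset.sum_sub_distrib, ← Finset.sum_add_distrib]
      exact Finset.sum_congr rfl fun i _ => by ring
    rw [hswap u ε] at h2
    linarith [h1, h2]
  set A := Real.sqrt (∑ j, u j ^ 2) with hA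
  set B := Real.sqrt (∑ j ∈ SD, β j ^ 2) with hB
  have hA0 : 0 ≤ A := Real.sqrt_nonneg _
  have hB0 : 0 ≤ B := Real.sqrt_nonneg _
  have hAsq : A ^ 2 = ∑ j, u j ^ 2 :=
    Real.sq_sqrt (Finset.sum_nonneg fun j _ => sq_nonneg _)
  -- noise bound
  have hnoise' : |∑ j, u j * ∑ i, X i j * ε i| ≤ lam * n * (Real.sqrt (I.card : ℝ) * A) := by
    calc |∑ j, u j * ∑ i, X i j * ε i| ≤ ∑ j, |u j * ∑ i, X i j * ε i| :=
          Finset.abs_sum_le_sum_abs _ _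
      _ = ∑ j ∈ I, |u j| * |∑ i, X i j * ε i| := by
          rw [← Finset.sum_subset (Finset.subset_univ I)]
          · exact Finset.sum_congr rfl fun j _ => abs_mul _ _
          · intro j _ hj; simp [husupp j hj]
      _ ≤ ∑ j ∈ I, |u j| * (lam * n) := by
          apply Finset.sum_le_sum
          intro j _
          apply mul_le_mul_of_nonneg_left _ (abs_nonneg _)
          have := hnoise j
          rw [div_le_iff₀ (by exact_mod_cast hn)] at this
          linarith
      _ = (lam * n) * ∑ j ∈ I, |u j| * 1 := by
          rw [Finset.mul_sum]
          exact Finset.sum_congr rfl fun j _ => by ring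
      _ ≤ (lam * n) * (Real.sqrt (∑ j ∈ I, |u j| ^ 2) * Real.sqrt (∑ j ∈ I, (1:ℝ) ^ 2)) := by
          apply mul_le_mul_of_nonneg_left (Real.sum_mul_le_sqrt_mul_sqrt _ _ _)
          positivity
      _ = lam * n * (Real.sqrt (I.card : ℝ) * A) := by
          congr 1
          rw [mul_comm]
          congr 1
          · simp
          · rw [hA, ← Finset.sum_subset (Finset.subset_univ I)]
            · exact congrArg _ (Finset.sum_congr rfl fun j _ => (sq_abs _))
            · intro j _ hj; simp [husupp j hj]
  -- cross term bound
  have hcross : |∑ i, X.mulVec u i * X.mulVec v i| ≤ θ * n * A * B := by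
    have := hθ u v husupp hvsupp
    rwa [hvsum] at this
  -- combine
  set C := θ * B + lam * Real.sqrt (I.card : ℝ) with hC
  have hC0 : 0 ≤ C := by
    have : (0:ℝ) ≤ Real.sqrt (I.card : ℝ) := Real.sqrt_nonneg _
    nlinarith
  have hXu : ∑ i, X.mulVec u i ^ 2 ≤ n * A * C := by
    rw [hkey]
    have h1 : ∑ j, u j * ∑ i, X i j * ε i ≤ lam * n * (Real.sqrt (I.card : ℝ) * A) :=
      le_trans (le_abs_self _) hnoise'
    have h2 : ∑ i, X.mulVec u i * X.mulVec v i ≤ θ * n * A * B :=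
      le_trans (le_abs_self _) hcross
    rw [hC]; nlinarith
  have hREu := hRE u husupp
  have husq : ∑ j, u j ^ 2 ≤ C ^ 2 / Λmin ^ 2 := by
    have hΛA : Λmin * A ≤ C := by
      rcases eq_or_lt_of_le hA0 with h | h
      · nlinarith
      · have key : Λmin * (n:ℝ) * A ^ 2 ≤ (n:ℝ) * A * C := by
          rw [hAsq]; exact le_trans hREu hXu
        have hn' : (0:ℝ) < n := by exact_mod_cast hn
        have h' : Λmin * A * ((n:ℝ) * A) ≤ C * ((n:ℝ) * A) := by
          have e1 : Λmin * A * ((n:ℝ) * A) = Λmin * (n:ℝ) * A ^ 2 := by ring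
          have e2 : C * ((n:ℝ) * A) = (n:ℝ) * A * C := by ring
          rw [e1, e2]; exact key
        exact le_of_mul_le_mul_right h' (by positivity)
    rw [le_div_iff₀ (by positivity), ← hAsq]
    nlinarith [mul_self_le_mul_self (mul_nonneg hΛmin.le hA0) hΛA]
  rw [hsplit, hvsum]
  exact add_le_add_left husq _
end

section
/- In the proof of Lemma on OLS with missing variables: if c = (X_Iᵀ X_I)^{-1} X_Iᵀ X_{S_D} β_{S_D} with I ∩ S_D = ∅, then ‖P_I X_{S_D} β_{S_D}‖₂ ≤ (√n · θ_{|I|,|S_D|} / √Λ_min(|I|)) · ‖β_{S_D}‖₂ and ‖c‖₂ ≤ θ_{|I|,|S_D|}‖β_{S_D}‖₂ / Λ_min(|I|), where P_I is orthogonal projection onto the column space of X_I. -/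
/-- Bounds on the projection of the dropped signal onto the column space of
X_I, where X c = P_I X_{S_D} β_{S_D}. -/
theorem stmt6 (n p : ℕ) (X : Matrix (Fin n) (Fin p) ℝ)
    (I SD : Finset (Fin p)) (hdisj : Disjoint I SD)
    (θ Λmin : ℝ) (hΛmin : 0 < Λmin) (hθ0 : 0 ≤ θ) (hn : 0 < n)
    (hRE : ∀ v : Fin p → ℝ, (∀ j ∉ I, v j = 0) →
      Λmin * n * (∑ j, (v j) ^ 2) ≤ ∑ i, (X.mulVec v i) ^ 2)
    (hθ : ∀ u v : Fin p → ℝ, (∀ j ∉ I, u j = 0) → (∀ j ∉ SD, v j = 0) →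
      |∑ i, (X.mulVec u i) * (X.mulVec v i)| ≤
        θ * n * Real.sqrt (∑ j, (u j) ^ 2) * Real.sqrt (∑ j, (v j) ^ 2))
    (b : Fin p → ℝ) (hb : ∀ j ∉ SD, b j = 0)
    (c : Fin p → ℝ) (hc : ∀ j ∉ I, c j = 0)
    (hnormal : ∀ j ∈ I, ∑ i, X i j * (X.mulVec c i - X.mulVec b i) = 0) :
    Real.sqrt (∑ i, (X.mulVec c i) ^ 2) ≤
      Real.sqrt (n : ℝ) * θ / Real.sqrt Λmin * Real.sqrt (∑ j, (b j) ^ 2) ∧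
    Real.sqrt (∑ j, (c j) ^ 2) ≤ θ * Real.sqrt (∑ j, (b j) ^ 2) / Λmin := by
  set nc := Real.sqrt (∑ j, (c j) ^ 2) with hncdef
  set nb := Real.sqrt (∑ j, (b j) ^ 2) with hnbdef
  have hcsum : (0:ℝ) ≤ ∑ j, (c j) ^ 2 := Finset.sum_nonneg fun _ _ => sq_nonneg _
  have hbsum : (0:ℝ) ≤ ∑ j, (b j) ^ 2 := Finset.sum_nonneg fun _ _ => sq_nonneg _
  have hAnn : (0:ℝ) ≤ ∑ i, (X.mulVec c i) ^ 2 := Finset.sum_nonneg fun _ _ => sq_nonneg _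
  have hnc0 : 0 ≤ nc := Real.sqrt_nonneg _
  have hnb0 : 0 ≤ nb := Real.sqrt_nonneg _
  have hnc2 : nc ^ 2 = ∑ j, (c j) ^ 2 := Real.sq_sqrt hcsum
  have hnpos : (0:ℝ) < n := by exact_mod_cast hn
  -- orthogonality relation
  have h0 : ∑ i, X.mulVec c i * (X.mulVec c i - X.mulVec b i) = 0 := by
    have hcalc : ∑ i, X.mulVec c i * (X.mulVec c i - X.mulVec b i)
        = ∑ j, c j * ∑ i, X i j * (X.mulVec c i - X.mulVec b i) := by
      calc ∑ i, X.mulVec c i * (X.mulVec c i - X.mulVec b i)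
          = ∑ i, ∑ j, (X i j * c j) * (X.mulVec c i - X.mulVec b i) := by
            refine Finset.sum_congr rfl fun i _ => ?_
            rw [← Finset.sum_mul]
            rfl
        _ = ∑ j, ∑ i, (X i j * c j) * (X.mulVec c i - X.mulVec b i) := Finset.sum_comm
        _ = ∑ j, c j * ∑ i, X i j * (X.mulVec c i - X.mulVec b i) := by
            refine Finset.sum_congr rfl fun j _ => ?_
            rw [Finset.mul_sum]
            exact Finset.sum_congr rfl fun i _ => by ring
    rw [hcalc]
    refine Finset.sum_eq_zero fun j _ => ?_
    by_cases hj : j ∈ I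
    · rw [hnormal j hj, mul_zero]
    · rw [hc j hj, zero_mul]
  have hkey : ∑ i, (X.mulVec c i) ^ 2 = ∑ i, X.mulVec c i * X.mulVec b i := by
    have hsub : ∑ i, (X.mulVec c i) ^ 2 - ∑ i, X.mulVec c i * X.mulVec b i = 0 := by
      rw [← Finset.sum_sub_distrib]
      simpa [sq, mul_sub] using h0
    linarith
  have hbound1 : ∑ i, (X.mulVec c i) ^ 2 ≤ θ * n * nc * nb := by
    calc ∑ i, (X.mulVec c i) ^ 2 = ∑ i, X.mulVec c i * X.mulVec b i := hkey
      _ ≤ |∑ i, X.mulVec c i * X.mulVec b i| := le_abs_self _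
      _ ≤ θ * n * nc * nb := hθ c b hc hb
  have hREc := hRE c hc
  have hc_le : nc ≤ θ * nb / Λmin := by
    rcases eq_or_lt_of_le hnc0 with h | h
    · rw [← h]; positivity
    · rw [le_div_iff₀ hΛmin]
      have h1 : Λmin * n * nc ^ 2 ≤ θ * n * nc * nb := by
        rw [hnc2]; linarith
      nlinarith [mul_pos hnpos h]
  refine ⟨?_, hc_le⟩
  have hRHS0 : 0 ≤ Real.sqrt (n : ℝ) * θ / Real.sqrt Λmin * nb := by positivity
  have heq : θ * (n:ℝ) * nb * (θ * nb / Λmin)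
      = (Real.sqrt (n : ℝ) * θ / Real.sqrt Λmin * nb) ^ 2 := by
    rw [mul_pow, div_pow, mul_pow, Real.sq_sqrt hnpos.le, Real.sq_sqrt hΛmin.le]
    field_simp
  have hA_le : ∑ i, (X.mulVec c i) ^ 2 ≤ (Real.sqrt (n : ℝ) * θ / Real.sqrt Λmin * nb) ^ 2 := by
    rw [← heq]
    have h2 : θ * (n:ℝ) * nb * nc ≤ θ * (n:ℝ) * nb * (θ * nb / Λmin) :=
      mul_le_mul_of_nonneg_left hc_le (by positivity)
    nlinarith
  calc Real.sqrt (∑ i, (X.mulVec c i) ^ 2)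
      ≤ Real.sqrt ((Real.sqrt (n : ℝ) * θ / Real.sqrt Λmin * nb) ^ 2) :=
        Real.sqrt_le_sqrt hA_le
    _ = Real.sqrt (n : ℝ) * θ / Real.sqrt Λmin * nb := Real.sqrt_sq hRHS0
end

section
/- Bound on dropped signal energy: let I = {j : |β_init,j| ≥ t_0}, D = {1,...,p}\I, and h = β_init − β^{(1)} where β^{(1)} is β restricted to T_0. If ∑_{j>s_0} β_j² ≤ s_0λ²σ² − a_0λ²σ² (as ensured by the definition of s_0 and A_0) and ‖h_{T_0}‖₂ ≤ C'_0 λ_{p,τ}σ√s_0, and t_0 ≤ C_4 λ_{p,τ}σ, then ‖β_D‖₂² ≤ ((C_4 + C'_0)² + 1)·λ_{p,τ}²σ²·s_0. -/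
/-- Bound on the dropped signal energy after thresholding. -/
theorem stmt8 (p s0 a0 : ℕ) (β βinit h : Fin p → ℝ)
    (lam lampτ σ C0' C4 t0 : ℝ)
    (hlam : 0 < lam) (hσ : 0 < σ) (hlampτ : lam ≤ lampτ)
    (hC0' : 0 < C0') (hC4 : 0 < C4) (ht0pos : 0 < t0)
    (hord : ∀ i j : Fin p, i ≤ j → |β j| ≤ |β i|)
    (hsum : ∑ i, min ((β i) ^ 2) (lam ^ 2 * σ ^ 2) ≤ (s0 : ℝ) * lam ^ 2 * σ ^ 2)
    (hA0 : ∀ j : Fin p, lam * σ < |β j| ↔ (j : ℕ) < a0) (ha0 : a0 ≤ s0)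
    (htail : ∑ j ∈ Finset.univ.filter (fun j : Fin p => s0 ≤ (j : ℕ)), (β j) ^ 2 ≤
      (s0 : ℝ) * lam ^ 2 * σ ^ 2 - (a0 : ℝ) * lam ^ 2 * σ ^ 2)
    (hh : ∀ j : Fin p, h j = βinit j - (if (j : ℕ) < s0 then β j else 0))
    (hhT0 : Real.sqrt (∑ j ∈ Finset.univ.filter (fun j : Fin p => (j : ℕ) < s0),
        (h j) ^ 2) ≤ C0' * lampτ * σ * Real.sqrt (s0 : ℝ))
    (ht0 : t0 ≤ C4 * lampτ * σ)
    (I : Finset (Fin p)) (hI : ∀ j, j ∈ I ↔ t0 ≤ |βinit j|) :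
    ∑ j ∈ Iᶜ, (β j) ^ 2 ≤ ((C4 + C0') ^ 2 + 1) * lampτ ^ 2 * σ ^ 2 * (s0 : ℝ) := by
  set c := C4 * lampτ * σ with hc
  set K := C0' * lampτ * σ with hK
  have hlampτ0 : 0 < lampτ := lt_of_lt_of_le hlam hlampτ
  have hcnn : 0 ≤ c := by positivity
  have hKnn : 0 ≤ K := by positivity
  set S := Finset.univ.filter (fun j : Fin p => (j : ℕ) < s0) with hS
  set T := Finset.univ.filter (fun j : Fin p => s0 ≤ (j : ℕ)) with hT
  -- split the sum
  have hsub : Iᶜ ⊆ (Iᶜ ∩ S) ∪ T := by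
    intro j hj
    rcases lt_or_ge (j : ℕ) s0 with hlt | hge
    · exact Finset.mem_union_left _ (Finset.mem_inter.mpr ⟨hj, by simp [hS, hlt]⟩)
    · exact Finset.mem_union_right _ (by simp [hT, hge])
  have hdisj : Disjoint (Iᶜ ∩ S) T := by
    rw [Finset.disjoint_left]
    intro j hj hjT
    have h1 : (j : ℕ) < s0 := by
      have := Finset.mem_inter.mp hj
      simpa [hS] using this.2
    have h2 : s0 ≤ (j : ℕ) := by simpa [hT] using hjT
    omega
  have hsplit : ∑ j ∈ Iᶜ, (β j) ^ 2 ≤ ∑ j ∈ Iᶜ ∩ S, (β j) ^ 2 + ∑ j ∈ T, (β j) ^ 2 := by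
    rw [← Finset.sum_union hdisj]
    exact Finset.sum_le_sum_of_subset_of_nonneg hsub (fun j _ _ => sq_nonneg _)
  -- tail bound
  have htail' : ∑ j ∈ T, (β j) ^ 2 ≤ lampτ ^ 2 * σ ^ 2 * s0 := by
    have h1 : (s0 : ℝ) * lam ^ 2 * σ ^ 2 - (a0 : ℝ) * lam ^ 2 * σ ^ 2 ≤
        lampτ ^ 2 * σ ^ 2 * s0 := by
      have ha0' : (0:ℝ) ≤ (a0 : ℝ) := Nat.cast_nonneg _
      have hlam2 : lam ^ 2 ≤ lampτ ^ 2 := by nlinarith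
      nlinarith [mul_nonneg (mul_nonneg (Nat.cast_nonneg (α := ℝ) s0)
          (sub_nonneg.mpr hlam2)) (sq_nonneg σ),
        mul_nonneg (mul_nonneg ha0' (sq_nonneg lam)) (sq_nonneg σ)]
    exact le_trans htail h1
  -- head bound
  have hterm : ∀ j ∈ Iᶜ ∩ S, (β j) ^ 2 ≤ (c + |h j|) ^ 2 := by
    intro j hj
    obtain ⟨hj1, hj2⟩ := Finset.mem_inter.mp hj
    have hjs : (j : ℕ) < s0 := by simpa [hS] using hj2
    have hnI : ¬ t0 ≤ |βinit j| := by
      have := Finset.mem_compl.mp hj1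
      simpa [hI] using this
    have hβ : β j = βinit j - h j := by
      have := hh j
      rw [if_pos hjs] at this
      linarith
    have habs : |β j| ≤ c + |h j| := by
      calc |β j| = |βinit j - h j| := by rw [hβ]
        _ ≤ |βinit j| + |h j| := abs_sub _ _
        _ ≤ c + |h j| := by
            have h1 : |βinit j| < t0 := lt_of_not_ge hnI
            linarith
    calc (β j) ^ 2 = |β j| ^ 2 := (sq_abs _).symm
      _ ≤ (c + |h j|) ^ 2 := by
          apply pow_le_pow_left₀ (abs_nonneg _) habs
  have hhead1 : ∑ j ∈ Iᶜ ∩ S, (β j) ^ 2 ≤ ∑ j ∈ S, (c + |h j|) ^ 2 := by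
    calc ∑ j ∈ Iᶜ ∩ S, (β j) ^ 2 ≤ ∑ j ∈ Iᶜ ∩ S, (c + |h j|) ^ 2 :=
          Finset.sum_le_sum hterm
      _ ≤ ∑ j ∈ S, (c + |h j|) ^ 2 := by
          apply Finset.sum_le_sum_of_subset_of_nonneg (Finset.inter_subset_right)
          intro j _ _
          positivity
  -- card bound
  have hcard : (S.card : ℝ) ≤ (s0 : ℝ) := by
    have h1 : S.card ≤ (Finset.range s0).card := by
      apply Finset.card_le_card_of_injOn (fun j : Fin p => (j : ℕ))
      · intro j hj
        rw [hS, Finset.mem_coe, Finset.mem_filter] at hj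
        exact Finset.mem_range.mpr hj.2
      · intro a _ b _ hab
        exact Fin.ext hab
    have h2 : S.card ≤ s0 := by simpa using h1
    exact_mod_cast h2
  -- Cauchy-Schwarz
  have hSnn : 0 ≤ ∑ j ∈ S, h j ^ 2 := Finset.sum_nonneg fun j _ => sq_nonneg _
  have hHsq : ∑ j ∈ S, h j ^ 2 ≤ K ^ 2 * s0 := by
    have h1 : Real.sqrt (∑ j ∈ S, h j ^ 2) ≤ K * Real.sqrt s0 := hhT0
    have h2 : (Real.sqrt (∑ j ∈ S, h j ^ 2)) ^ 2 ≤ (K * Real.sqrt s0) ^ 2 :=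
      pow_le_pow_left₀ (Real.sqrt_nonneg _) h1 2
    rw [Real.sq_sqrt hSnn] at h2
    calc ∑ j ∈ S, h j ^ 2 ≤ (K * Real.sqrt s0) ^ 2 := h2
      _ = K ^ 2 * s0 := by
          rw [mul_pow, Real.sq_sqrt (Nat.cast_nonneg _)]
  have hCS : (∑ j ∈ S, |h j|) ^ 2 ≤ (s0 : ℝ) * ∑ j ∈ S, h j ^ 2 := by
    have cs := Finset.sum_mul_sq_le_sq_mul_sq S (fun _ => (1:ℝ)) (fun j => |h j|)
    simp only [one_mul, one_pow, sq_abs, Finset.sum_const, nsmul_eq_mul, mul_one] at cs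
    calc (∑ j ∈ S, |h j|) ^ 2 ≤ (S.card : ℝ) * ∑ j ∈ S, h j ^ 2 := cs
      _ ≤ (s0 : ℝ) * ∑ j ∈ S, h j ^ 2 := by
          apply mul_le_mul_of_nonneg_right hcard hSnn
  have habsnn : 0 ≤ ∑ j ∈ S, |h j| := Finset.sum_nonneg fun j _ => abs_nonneg _
  have habs2 : ∑ j ∈ S, |h j| ≤ K * s0 := by
    have h1 : (∑ j ∈ S, |h j|) ^ 2 ≤ (K * s0) ^ 2 := by
      calc (∑ j ∈ S, |h j|) ^ 2 ≤ (s0 : ℝ) * ∑ j ∈ S, h j ^ 2 := hCS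
        _ ≤ (s0 : ℝ) * (K ^ 2 * s0) :=
            mul_le_mul_of_nonneg_left hHsq (Nat.cast_nonneg _)
        _ = (K * s0) ^ 2 := by ring
    have hy : (0:ℝ) ≤ K * s0 := mul_nonneg hKnn (Nat.cast_nonneg _)
    nlinarith [h1, habsnn, hy]
  -- expand the head sum
  have hexp : ∑ j ∈ S, (c + |h j|) ^ 2 =
      (S.card : ℝ) * c ^ 2 + 2 * c * (∑ j ∈ S, |h j|) + ∑ j ∈ S, h j ^ 2 := by
    have : ∀ j : Fin p, (c + |h j|) ^ 2 = c ^ 2 + 2 * c * |h j| + h j ^ 2 := by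
      intro j
      rw [add_sq, sq_abs]
    rw [Finset.sum_congr rfl (fun j _ => this j)]
    rw [Finset.sum_add_distrib, Finset.sum_add_distrib, Finset.sum_const,
      ← Finset.mul_sum]
    push_cast
    ring
  have hhead : ∑ j ∈ S, (c + |h j|) ^ 2 ≤ (c + K) ^ 2 * s0 := by
    rw [hexp]
    have e1 : (S.card : ℝ) * c ^ 2 ≤ (s0 : ℝ) * c ^ 2 :=
      mul_le_mul_of_nonneg_right hcard (sq_nonneg c)
    have e2 : 2 * c * (∑ j ∈ S, |h j|) ≤ 2 * c * (K * s0) :=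
      mul_le_mul_of_nonneg_left habs2 (by linarith)
    have e4 : (c + K) ^ 2 * s0 = (s0 : ℝ) * c ^ 2 + 2 * c * (K * s0) + K ^ 2 * s0 := by
      ring
    rw [e4]
    linarith [e1, e2, hHsq]
  have hfinal : (c + K) ^ 2 = (C4 + C0') ^ 2 * lampτ ^ 2 * σ ^ 2 := by
    rw [hc, hK]; ring
  calc ∑ j ∈ Iᶜ, (β j) ^ 2 ≤ ∑ j ∈ Iᶜ ∩ S, (β j) ^ 2 + ∑ j ∈ T, (β j) ^ 2 := hsplit
    _ ≤ (c + K) ^ 2 * s0 + lampτ ^ 2 * σ ^ 2 * s0 := by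
        have := le_trans hhead1 hhead
        linarith [htail']
    _ = ((C4 + C0') ^ 2 + 1) * lampτ ^ 2 * σ ^ 2 * s0 := by
        rw [hfinal]; ring
end

section
/- General dropped-energy bound: for any threshold t_0 and I = {j : |β_init,j| ≥ t_0}, D = I^c, D_{11} = D ∩ A_0, h = β_init − β_{T_0}, it holds ‖β_D‖₂² ≤ (s_0 − a_0)λ²σ² + (t_0√a_0 + ‖h_{D_{11}}‖₂)². Moreover if t_0 < β_min,A_0 := min_{j∈A_0}|β_j|, then ‖β_D‖₂² ≤ (s_0 − a_0)λ²σ² + ‖h_{D_{11}}‖₂²·(β_min,A_0/(β_min,A_0 − t_0))². -/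
/-- General dropped-energy bound for an arbitrary threshold. -/
theorem stmt9 (p s0 a0 : ℕ) (β βinit h : Fin p → ℝ)
    (lam σ t0 : ℝ) (hlam : 0 < lam) (hσ : 0 < σ) (ht0pos : 0 < t0)
    (hord : ∀ i j : Fin p, i ≤ j → |β j| ≤ |β i|)
    (hsum : ∑ i, min ((β i) ^ 2) (lam ^ 2 * σ ^ 2) ≤ (s0 : ℝ) * lam ^ 2 * σ ^ 2)
    (hA0 : ∀ j : Fin p, lam * σ < |β j| ↔ (j : ℕ) < a0) (ha0 : a0 ≤ s0)
    (hh : ∀ j : Fin p, h j = βinit j - (if (j : ℕ) < s0 then β j else 0))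
    (I : Finset (Fin p)) (hI : ∀ j, j ∈ I ↔ t0 ≤ |βinit j|)
    (D11 : Finset (Fin p)) (hD11 : ∀ j, j ∈ D11 ↔ (j ∉ I ∧ (j : ℕ) < a0)) :
    (∑ j ∈ Iᶜ, (β j) ^ 2 ≤ ((s0 : ℝ) - (a0 : ℝ)) * lam ^ 2 * σ ^ 2 +
      (t0 * Real.sqrt (a0 : ℝ) + Real.sqrt (∑ j ∈ D11, (h j) ^ 2)) ^ 2) ∧
    (∀ bmin : ℝ, (∀ j : Fin p, (j : ℕ) < a0 → bmin ≤ |β j|) → t0 < bmin →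
      ∑ j ∈ Iᶜ, (β j) ^ 2 ≤ ((s0 : ℝ) - (a0 : ℝ)) * lam ^ 2 * σ ^ 2 +
        (∑ j ∈ D11, (h j) ^ 2) * (bmin / (bmin - t0)) ^ 2) := by
  have hls : (0:ℝ) < lam ^ 2 * σ ^ 2 := by positivity
  have hD11sub : D11 ⊆ Iᶜ := by
    intro j hj
    exact Finset.mem_compl.2 ((hD11 j).1 hj).1
  have hsplit : ∑ j ∈ Iᶜ \ D11, (β j) ^ 2 + ∑ j ∈ D11, (β j) ^ 2 = ∑ j ∈ Iᶜ, (β j) ^ 2 :=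
    Finset.sum_sdiff hD11sub
  have hhD : ∀ j ∈ D11, h j = βinit j - β j := by
    intro j hj
    have hja : (j : ℕ) < a0 := ((hD11 j).1 hj).2
    rw [hh j, if_pos (lt_of_lt_of_le hja ha0)]
  have hβinit_small : ∀ j ∈ D11, |βinit j| < t0 := by
    intro j hj
    have := ((hD11 j).1 hj).1
    rw [hI j] at this
    linarith [not_le.1 this]
  have hβle : ∀ j ∈ D11, |β j| ≤ t0 + |h j| := by
    intro j hj
    have h1 := hhD j hj
    have h2 := hβinit_small j hj
    have e : β j = βinit j - h j := by rw [h1]; ring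
    have h3 : |β j| ≤ |βinit j| + |h j| := by rw [e]; exact abs_sub _ _
    linarith
  -- tail bound
  have tail : ∑ j ∈ Iᶜ \ D11, (β j) ^ 2 ≤ ((s0 : ℝ) - a0) * lam ^ 2 * σ ^ 2 := by
    by_cases hpa : a0 ≤ p
    · set A : Finset (Fin p) := Finset.univ.filter (fun j => (j : ℕ) < a0) with hA
      have hcardA : A.card = a0 := by
        have himg : A.image Fin.val = Finset.range a0 := by
          ext n
          simp only [hA, Finset.mem_image, Finset.mem_filter, Finset.mem_univ, true_and,
            Finset.mem_range]
          constructor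
          · rintro ⟨j, hj, rfl⟩; exact hj
          · intro hn; exact ⟨⟨n, lt_of_lt_of_le hn hpa⟩, hn, rfl⟩
        rw [← Finset.card_image_of_injective A Fin.val_injective, himg, Finset.card_range]
      have hsum_split : ∑ j ∈ A, min ((β j) ^ 2) (lam ^ 2 * σ ^ 2)
          + ∑ j ∈ Aᶜ, min ((β j) ^ 2) (lam ^ 2 * σ ^ 2)
          = ∑ j, min ((β j) ^ 2) (lam ^ 2 * σ ^ 2) :=
        Finset.sum_add_sum_compl A _
      have hsumA : ∑ j ∈ A, min ((β j) ^ 2) (lam ^ 2 * σ ^ 2) = (a0 : ℝ) * (lam ^ 2 * σ ^ 2) := by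
        rw [Finset.sum_congr rfl (fun j hj => ?_), Finset.sum_const, hcardA, nsmul_eq_mul]
        have hja : (j : ℕ) < a0 := (Finset.mem_filter.1 hj).2
        have hb : lam * σ < |β j| := (hA0 j).2 hja
        have h2 : lam ^ 2 * σ ^ 2 ≤ (β j) ^ 2 := by
          have := mul_self_le_mul_self (by positivity : (0:ℝ) ≤ lam * σ) hb.le
          nlinarith [sq_abs (β j)]
        exact min_eq_right h2
      have hsub : Iᶜ \ D11 ⊆ Aᶜ := by
        intro j hj
        rw [Finset.mem_sdiff] at hj
        rw [Finset.mem_compl, hA, Finset.mem_filter]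
        rintro ⟨-, hja⟩
        exact hj.2 ((hD11 j).2 ⟨Finset.mem_compl.1 hj.1, hja⟩)
      have heq : ∀ j ∈ Iᶜ \ D11, (β j) ^ 2 = min ((β j) ^ 2) (lam ^ 2 * σ ^ 2) := by
        intro j hj
        have hja : ¬ ((j : ℕ) < a0) := by
          intro hja
          rw [Finset.mem_sdiff] at hj
          exact hj.2 ((hD11 j).2 ⟨Finset.mem_compl.1 hj.1, hja⟩)
        have h1 : |β j| ≤ lam * σ := le_of_not_gt (fun hc => hja ((hA0 j).1 hc))
        have h2 : (β j) ^ 2 ≤ lam ^ 2 * σ ^ 2 := by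
          have := mul_self_le_mul_self (abs_nonneg (β j)) h1
          nlinarith [sq_abs (β j)]
        exact (min_eq_left h2).symm
      calc ∑ j ∈ Iᶜ \ D11, (β j) ^ 2
          = ∑ j ∈ Iᶜ \ D11, min ((β j) ^ 2) (lam ^ 2 * σ ^ 2) := Finset.sum_congr rfl heq
        _ ≤ ∑ j ∈ Aᶜ, min ((β j) ^ 2) (lam ^ 2 * σ ^ 2) := by
            apply Finset.sum_le_sum_of_subset_of_nonneg hsub
            intro j _ _
            exact le_min (sq_nonneg _) hls.le
        _ ≤ (s0 : ℝ) * lam ^ 2 * σ ^ 2 - (a0 : ℝ) * (lam ^ 2 * σ ^ 2) := by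
            linarith [hsum_split, hsumA, hsum]
        _ = ((s0 : ℝ) - a0) * lam ^ 2 * σ ^ 2 := by ring
    · have hempty : Iᶜ \ D11 = ∅ := by
        apply Finset.eq_empty_of_forall_notMem
        intro j hj
        rw [Finset.mem_sdiff] at hj
        exact hj.2 ((hD11 j).2 ⟨Finset.mem_compl.1 hj.1, lt_of_lt_of_le j.2 (le_of_not_ge hpa)⟩)
      rw [hempty, Finset.sum_empty]
      have : (a0 : ℝ) ≤ (s0 : ℝ) := Nat.cast_le.2 ha0
      nlinarith
  have hcardD11 : (D11.card : ℝ) ≤ (a0 : ℝ) := by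
    have hc : D11.card ≤ a0 := by
      have := Finset.card_le_card_of_injOn (fun j : Fin p => (j : ℕ))
        (fun a ha => Finset.mem_range.2 ((hD11 a).1 ha).2)
        (fun a _ b _ hab => Fin.val_injective hab)
      simpa using this
    exact_mod_cast hc
  set S : ℝ := ∑ j ∈ D11, (h j) ^ 2 with hS
  have hSnonneg : 0 ≤ S := Finset.sum_nonneg fun j _ => sq_nonneg _
  constructor
  · -- part 1
    have hsum_abs_nonneg : (0:ℝ) ≤ ∑ j ∈ D11, |h j| :=
      Finset.sum_nonneg fun j _ => abs_nonneg _
    have cs : (∑ j ∈ D11, |h j|) ^ 2 ≤ (D11.card : ℝ) * S := by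
      have := sq_sum_le_card_mul_sum_sq (s := D11) (f := fun j => |h j|)
      simpa [sq_abs, hS] using this
    have h7 : (∑ j ∈ D11, |h j|) ^ 2 ≤ (a0 : ℝ) * S :=
      cs.trans (mul_le_mul_of_nonneg_right hcardD11 hSnonneg)
    have h6 : ∑ j ∈ D11, |h j| ≤ Real.sqrt (a0 : ℝ) * Real.sqrt S := by
      calc ∑ j ∈ D11, |h j| = Real.sqrt ((∑ j ∈ D11, |h j|) ^ 2) :=
            (Real.sqrt_sq hsum_abs_nonneg).symm
        _ ≤ Real.sqrt ((a0 : ℝ) * S) := Real.sqrt_le_sqrt h7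
        _ = Real.sqrt (a0 : ℝ) * Real.sqrt S := Real.sqrt_mul (by positivity) S
    have hb : ∑ j ∈ D11, (β j) ^ 2
        ≤ (D11.card : ℝ) * t0 ^ 2 + 2 * t0 * (∑ j ∈ D11, |h j|) + S := by
      have hpt : ∀ j ∈ D11, (β j) ^ 2 ≤ t0 ^ 2 + 2 * t0 * |h j| + (h j) ^ 2 := by
        intro j hj
        have hm := mul_self_le_mul_self (abs_nonneg (β j)) (hβle j hj)
        have e1 : |β j| * |β j| = (β j) ^ 2 := by rw [← sq_abs (β j)]; ring
        have e2 : (t0 + |h j|) * (t0 + |h j|) = t0 ^ 2 + 2 * t0 * |h j| + (h j) ^ 2 := by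
          rw [← sq_abs (h j)]; ring
        rw [e1, e2] at hm
        exact hm
      calc ∑ j ∈ D11, (β j) ^ 2
          ≤ ∑ j ∈ D11, (t0 ^ 2 + 2 * t0 * |h j| + (h j) ^ 2) := Finset.sum_le_sum hpt
        _ = (D11.card : ℝ) * t0 ^ 2 + 2 * t0 * (∑ j ∈ D11, |h j|) + S := by
            rw [Finset.sum_add_distrib, Finset.sum_add_distrib, Finset.sum_const,
              nsmul_eq_mul, ← Finset.mul_sum]
    have hexp : (t0 * Real.sqrt (a0 : ℝ) + Real.sqrt S) ^ 2
        = t0 ^ 2 * (a0 : ℝ) + 2 * t0 * (Real.sqrt (a0 : ℝ) * Real.sqrt S) + S := by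
      rw [add_sq, mul_pow, Real.sq_sqrt (by positivity : (0:ℝ) ≤ (a0:ℝ)), Real.sq_sqrt hSnonneg]
      ring
    rw [hexp]
    have l1 : 2 * t0 * (∑ j ∈ D11, |h j|) ≤ 2 * t0 * (Real.sqrt (a0 : ℝ) * Real.sqrt S) :=
      mul_le_mul_of_nonneg_left h6 (by positivity)
    have l2 : (D11.card : ℝ) * t0 ^ 2 ≤ (a0 : ℝ) * t0 ^ 2 :=
      mul_le_mul_of_nonneg_right hcardD11 (sq_nonneg t0)
    linarith [hsplit, tail, hb, l1, l2]
  · intro bmin hbmin hbt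
    have hd : (0:ℝ) < bmin - t0 := by linarith
    have key : ∀ j ∈ D11, (β j) ^ 2 ≤ (h j) ^ 2 * (bmin / (bmin - t0)) ^ 2 := by
      intro j hj
      have h1 : bmin ≤ |β j| := hbmin j ((hD11 j).1 hj).2
      have h2 : |β j| ≤ t0 + |h j| := hβle j hj
      have h3 : |β j| * (bmin - t0) ≤ bmin * |h j| := by
        have p1 : t0 * bmin ≤ t0 * |β j| := mul_le_mul_of_nonneg_left h1 ht0pos.le
        have p2 : bmin * |β j| ≤ bmin * (t0 + |h j|) :=
          mul_le_mul_of_nonneg_left h2 (by linarith)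
        nlinarith
      have h4 : (|β j| * (bmin - t0)) * (|β j| * (bmin - t0)) ≤ (bmin * |h j|) * (bmin * |h j|) :=
        mul_self_le_mul_self (mul_nonneg (abs_nonneg _) hd.le) h3
      have e1 : (|β j| * (bmin - t0)) * (|β j| * (bmin - t0)) = (β j) ^ 2 * (bmin - t0) ^ 2 := by
        rw [← sq_abs (β j)]; ring
      have e2 : (bmin * |h j|) * (bmin * |h j|) = (h j) ^ 2 * bmin ^ 2 := by
        rw [← sq_abs (h j)]; ring
      have h5 : (β j) ^ 2 * (bmin - t0) ^ 2 ≤ (h j) ^ 2 * bmin ^ 2 := by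
        rw [← e1, ← e2]; exact h4
      rw [div_pow, ← mul_div_assoc, le_div_iff₀ (by positivity : (0:ℝ) < (bmin - t0) ^ 2)]
      linarith
    have hD : ∑ j ∈ D11, (β j) ^ 2 ≤ S * (bmin / (bmin - t0)) ^ 2 := by
      rw [hS, Finset.sum_mul]
      exact Finset.sum_le_sum key
    linarith [hsplit, tail, hD]
end

section
/- If β_min,A_0 ≥ ‖h_{A_0}‖_∞ + t_0 where h = β_init − β_{T_0} and I = {j : |β_init,j| ≥ t_0}, then A_0 ⊆ I; and if additionally t_0 ≥ ‖(β_init)_{T_0^c}‖₁/š_0 (or t_0 ≥ ‖(β_init)_{T_0^c}‖₂/√š_0), then |I ∩ T_0^c| ≤ š_0, hence |I| ≤ s_0 + š_0; moreover ‖β_D‖₂² ≤ (s_0 − a_0)λ²σ² where D = I^c. -/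
/-- Recovery of the strong-signal set A0 and sparsity of the selected model. -/
theorem stmt10 (p s0 a0 sv0 : ℕ) (β βinit h : Fin p → ℝ)
    (lam σ t0 : ℝ) (hlam : 0 < lam) (hσ : 0 < σ) (ht0pos : 0 < t0)
    (hsv0 : s0 ≤ sv0)
    (hord : ∀ i j : Fin p, i ≤ j → |β j| ≤ |β i|)
    (hsum : ∑ i, min ((β i) ^ 2) (lam ^ 2 * σ ^ 2) ≤ (s0 : ℝ) * lam ^ 2 * σ ^ 2)
    (hA0 : ∀ j : Fin p, lam * σ < |β j| ↔ (j : ℕ) < a0) (ha0 : a0 ≤ s0)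
    (T0 : Finset (Fin p)) (hT0 : ∀ j, j ∈ T0 ↔ (j : ℕ) < s0)
    (hh : ∀ j : Fin p, h j = βinit j - (if (j : ℕ) < s0 then β j else 0))
    (hmin : ∀ j k : Fin p, (j : ℕ) < a0 → (k : ℕ) < a0 → |h k| + t0 ≤ |β j|)
    (I : Finset (Fin p)) (hI : ∀ j, j ∈ I ↔ t0 ≤ |βinit j|) :
    (∀ j : Fin p, (j : ℕ) < a0 → j ∈ I) ∧
    (((∑ j ∈ T0ᶜ, |βinit j| ≤ (sv0 : ℝ) * t0) ∨
      (∑ j ∈ T0ᶜ, (βinit j) ^ 2 ≤ (sv0 : ℝ) * t0 ^ 2)) →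
      ((I \ T0).card ≤ sv0 ∧ I.card ≤ s0 + sv0)) ∧
    ∑ j ∈ Iᶜ, (β j) ^ 2 ≤ ((s0 : ℝ) - (a0 : ℝ)) * lam ^ 2 * σ ^ 2 := by
  have part1 : ∀ j : Fin p, (j : ℕ) < a0 → j ∈ I := by
    intro j hj
    rw [hI]
    have hm := hmin j j hj hj
    have hhj := hh j
    rw [if_pos (lt_of_lt_of_le hj ha0)] at hhj
    have habs : |β j| ≤ |βinit j| + |h j| := by
      have : β j = βinit j - h j := by rw [hhj]; ring
      rw [this]
      exact abs_sub _ _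
    linarith
  have hT0card : T0.card ≤ s0 := by
    have himg : T0.image (fun j : Fin p => (j : ℕ)) ⊆ Finset.range s0 := by
      intro n hn
      simp only [Finset.mem_image] at hn
      obtain ⟨j, hj, rfl⟩ := hn
      exact Finset.mem_range.mpr ((hT0 j).1 hj)
    have := Finset.card_le_card himg
    rwa [Finset.card_image_of_injective _ Fin.val_injective, Finset.card_range] at this
  refine ⟨part1, ?_, ?_⟩
  · rintro (hc | hc)
    · have hsub : I \ T0 ⊆ T0ᶜ := by
        intro j hj
        simp only [Finset.mem_sdiff] at hj
        simpa using hj.2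
      have h1 : ((I \ T0).card : ℝ) * t0 ≤ ∑ j ∈ I \ T0, |βinit j| := by
        calc ((I \ T0).card : ℝ) * t0 = ∑ _j ∈ I \ T0, t0 := by
              rw [Finset.sum_const, nsmul_eq_mul]
          _ ≤ ∑ j ∈ I \ T0, |βinit j| := by
              apply Finset.sum_le_sum
              intro j hj
              exact (hI j).1 (Finset.mem_sdiff.1 hj).1
      have h2 : ∑ j ∈ I \ T0, |βinit j| ≤ ∑ j ∈ T0ᶜ, |βinit j| :=
        Finset.sum_le_sum_of_subset_of_nonneg hsub (fun j _ _ => abs_nonneg _)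
      have hcard : ((I \ T0).card : ℝ) ≤ (sv0 : ℝ) := by
        have := le_trans h1 (le_trans h2 hc)
        exact le_of_mul_le_mul_right this ht0pos
      have hcard' : (I \ T0).card ≤ sv0 := by exact_mod_cast hcard
      constructor
      · exact hcard'
      · calc I.card ≤ (I ∩ T0).card + (I \ T0).card := by
              rw [Finset.card_inter_add_card_sdiff]
          _ ≤ s0 + sv0 := by
              have : (I ∩ T0).card ≤ T0.card := Finset.card_le_card (Finset.inter_subset_right)
              omega
    · have hsub : I \ T0 ⊆ T0ᶜ := by
        intro j hj
        simp only [Finset.mem_sdiff] at hj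
        simpa using hj.2
      have h1 : ((I \ T0).card : ℝ) * t0 ^ 2 ≤ ∑ j ∈ I \ T0, (βinit j) ^ 2 := by
        calc ((I \ T0).card : ℝ) * t0 ^ 2 = ∑ _j ∈ I \ T0, t0 ^ 2 := by
              rw [Finset.sum_const, nsmul_eq_mul]
          _ ≤ ∑ j ∈ I \ T0, (βinit j) ^ 2 := by
              apply Finset.sum_le_sum
              intro j hj
              have ht := (hI j).1 (Finset.mem_sdiff.1 hj).1
              calc t0 ^ 2 ≤ |βinit j| ^ 2 := by
                    apply pow_le_pow_left₀ (le_of_lt ht0pos) ht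
                _ = (βinit j) ^ 2 := sq_abs _
      have h2 : ∑ j ∈ I \ T0, (βinit j) ^ 2 ≤ ∑ j ∈ T0ᶜ, (βinit j) ^ 2 :=
        Finset.sum_le_sum_of_subset_of_nonneg hsub (fun j _ _ => sq_nonneg _)
      have hcard : ((I \ T0).card : ℝ) ≤ (sv0 : ℝ) := by
        have := le_trans h1 (le_trans h2 hc)
        exact le_of_mul_le_mul_right this (by positivity)
      have hcard' : (I \ T0).card ≤ sv0 := by exact_mod_cast hcard
      constructor
      · exact hcard'
      · calc I.card ≤ (I ∩ T0).card + (I \ T0).card := by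
              rw [Finset.card_inter_add_card_sdiff]
          _ ≤ s0 + sv0 := by
              have : (I ∩ T0).card ≤ T0.card := Finset.card_le_card (Finset.inter_subset_right)
              omega
  · -- third part
    have hls : (0:ℝ) < lam ^ 2 * σ ^ 2 := by positivity
    by_cases hpa : a0 ≤ p
    · set A0 : Finset (Fin p) := Finset.univ.filter (fun j => (j : ℕ) < a0) with hA0def
      have hA0card : A0.card = a0 := by
        have : A0.image (fun j : Fin p => (j : ℕ)) = Finset.range a0 := by
          ext n
          simp only [Finset.mem_image, Finset.mem_range, hA0def, Finset.mem_filter,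
            Finset.mem_univ, true_and]
          constructor
          · rintro ⟨j, hj, rfl⟩; exact hj
          · intro hn
            exact ⟨⟨n, lt_of_lt_of_le hn hpa⟩, hn, rfl⟩
        have := congrArg Finset.card this
        rwa [Finset.card_image_of_injective _ Fin.val_injective, Finset.card_range] at this
      have hsubIA : Iᶜ ⊆ A0ᶜ := by
        intro j hj
        simp only [Finset.mem_compl, hA0def, Finset.mem_filter, Finset.mem_univ, true_and] at hj ⊢
        intro hlt
        exact hj (part1 j hlt)
      have hIc : ∀ j ∈ Iᶜ, (β j) ^ 2 = min ((β j) ^ 2) (lam ^ 2 * σ ^ 2) := by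
        intro j hj
        have hna : ¬ ((j : ℕ) < a0) := by
          intro hlt
          exact (Finset.mem_compl.1 hj) (part1 j hlt)
        have hle : |β j| ≤ lam * σ := le_of_not_gt (fun hc => hna ((hA0 j).1 hc))
        have : (β j) ^ 2 ≤ lam ^ 2 * σ ^ 2 := by
          have := pow_le_pow_left₀ (abs_nonneg (β j)) hle 2
          rw [sq_abs] at this
          calc (β j) ^ 2 ≤ (lam * σ) ^ 2 := this
            _ = lam ^ 2 * σ ^ 2 := by ring
        exact (min_eq_left this).symm
      have hA0sum : ∑ j ∈ A0, min ((β j) ^ 2) (lam ^ 2 * σ ^ 2) = (a0 : ℝ) * (lam ^ 2 * σ ^ 2) := by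
        rw [Finset.sum_congr rfl (g := fun _ => lam ^ 2 * σ ^ 2) ?_]
        · rw [Finset.sum_const, hA0card, nsmul_eq_mul]
        · intro j hj
          simp only [hA0def, Finset.mem_filter, Finset.mem_univ, true_and] at hj
          have hlt : lam * σ < |β j| := (hA0 j).2 hj
          apply min_eq_right
          have := pow_le_pow_left₀ (by positivity : (0:ℝ) ≤ lam * σ) (le_of_lt hlt) 2
          rw [sq_abs] at this
          calc lam ^ 2 * σ ^ 2 = (lam * σ) ^ 2 := by ring
            _ ≤ (β j) ^ 2 := this
      have hstep : ∑ j ∈ Iᶜ, (β j) ^ 2 ≤ ∑ j ∈ A0ᶜ, min ((β j) ^ 2) (lam ^ 2 * σ ^ 2) := by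
        calc ∑ j ∈ Iᶜ, (β j) ^ 2 = ∑ j ∈ Iᶜ, min ((β j) ^ 2) (lam ^ 2 * σ ^ 2) :=
              Finset.sum_congr rfl hIc
          _ ≤ ∑ j ∈ A0ᶜ, min ((β j) ^ 2) (lam ^ 2 * σ ^ 2) := by
              apply Finset.sum_le_sum_of_subset_of_nonneg hsubIA
              intro j _ _
              exact le_min (sq_nonneg _) (le_of_lt hls)
      have hsplit : ∑ j ∈ A0ᶜ, min ((β j) ^ 2) (lam ^ 2 * σ ^ 2)
          = (∑ j, min ((β j) ^ 2) (lam ^ 2 * σ ^ 2)) - (a0 : ℝ) * (lam ^ 2 * σ ^ 2) := by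
        rw [← hA0sum, eq_sub_iff_add_eq, Finset.sum_compl_add_sum]
      calc ∑ j ∈ Iᶜ, (β j) ^ 2
          ≤ (∑ j, min ((β j) ^ 2) (lam ^ 2 * σ ^ 2)) - (a0 : ℝ) * (lam ^ 2 * σ ^ 2) := by
            rw [← hsplit]; exact hstep
        _ ≤ ((s0 : ℝ) - (a0 : ℝ)) * lam ^ 2 * σ ^ 2 := by nlinarith [hsum]
    · have hIce : Iᶜ = ∅ := by
        apply Finset.eq_empty_of_forall_notMem
        intro j hj
        exact (Finset.mem_compl.1 hj) (part1 j (lt_of_lt_of_le j.isLt (le_of_not_ge hpa)))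
      rw [hIce, Finset.sum_empty]
      have h0 : (0:ℝ) ≤ (s0 : ℝ) - (a0 : ℝ) := by
        have : (a0:ℝ) ≤ (s0:ℝ) := by exact_mod_cast ha0
        linarith
      nlinarith
end

section
/- Cone decomposition bound (Candès–Tao Lemma 3.1 generalization): if Λ_min(2s_0) > 0 and θ_{s_0,2s_0} < ∞, then for any h ∈ ℝ^p, with T_0 the positions of the s_0 largest entries of |h| restricted as given, T_1 the next s_0 largest outside T_0, T_{01} = T_0 ∪ T_1: ‖h_{T_{01}}‖₂ ≤ ‖Xh‖₂/(√(Λ_min(2s_0))·√n) + (θ_{s_0,2s_0}/(√s_0·Λ_min(2s_0)))·‖h_{T_0^c}‖₁, and ‖h_{T_{01}^c}‖₂² ≤ ‖h_{T_0^c}‖₁²/s_0, hence ‖h‖₂² ≤ ‖h_{T_{01}}‖₂² + ‖h_{T_0^c}‖₁²/s_0. -/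
lemma sumSqRestr {p : ℕ} (h : Fin p → ℝ) (S : Finset (Fin p)) :
    ∑ j, (if j ∈ S then h j else 0) ^ 2 = ∑ j ∈ S, h j ^ 2 := by
  have e : ∀ j : Fin p, (if j ∈ S then h j else 0) ^ 2 = (if j ∈ S then h j ^ 2 else 0) := by
    intro j; split <;> simp
  rw [Finset.sum_congr rfl (fun j _ => e j), Finset.sum_ite_mem, Finset.univ_inter]

lemma sqrt_mul_div (s0 : ℕ) (hs0 : 0 < s0) (S : ℝ) :
    Real.sqrt s0 * (S / s0) = S / Real.sqrt s0 := by
  have hs0R : (0:ℝ) < s0 := by exact_mod_cast hs0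
  have hsq : (0:ℝ) < Real.sqrt s0 := Real.sqrt_pos.mpr hs0R
  have hss : Real.sqrt s0 * Real.sqrt s0 = (s0:ℝ) := Real.mul_self_sqrt hs0R.le
  rw [eq_div_iff hsq.ne']
  calc Real.sqrt s0 * (S / s0) * Real.sqrt s0
      = (Real.sqrt s0 * Real.sqrt s0) * (S / s0) := by ring
    _ = (s0:ℝ) * (S / s0) := by rw [hss]
    _ = S := by field_simp

lemma chunkShort {n p s0 : ℕ} (X : Matrix (Fin n) (Fin p) ℝ) (θ : ℝ) (hθ0 : 0 ≤ θ)
    (h u : Fin p → ℝ) (T01 : Finset (Fin p)) (hT01 : T01.card ≤ 2 * s0)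
    (hu : ∀ j ∉ T01, u j = 0)
    (hθ : ∀ (a b : Fin p → ℝ) (T T' : Finset (Fin p)), Disjoint T T' →
      T.card ≤ s0 → T'.card ≤ 2 * s0 →
      (∀ j ∉ T, a j = 0) → (∀ j ∉ T', b j = 0) →
      |∑ i, (X.mulVec a i) * (X.mulVec b i)| ≤
        θ * n * Real.sqrt (∑ j, (a j) ^ 2) * Real.sqrt (∑ j, (b j) ^ 2))
    (t : List (Fin p)) (hlen : t.length ≤ s0) (hdisj : ∀ j ∈ t, j ∉ T01)
    (m : ℝ) (hm : 0 ≤ m) (hmb : ∀ j ∈ t, |h j| ≤ m) :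
    |∑ i, (X.mulVec (fun j => if j ∈ t then h j else 0) i) * (X.mulVec u i)| ≤
      θ * n * (Real.sqrt s0 * m) * Real.sqrt (∑ j, u j ^ 2) := by
  have h1 : |∑ i, (X.mulVec (fun j => if j ∈ t then h j else 0) i) * (X.mulVec u i)| ≤
      θ * n * Real.sqrt (∑ j, (if j ∈ t then h j else 0) ^ 2) * Real.sqrt (∑ j, u j ^ 2) := by
    apply hθ _ u t.toFinset T01
    · rw [Finset.disjoint_left]; intro j hj; exact hdisj j (List.mem_toFinset.mp hj)
    · exact le_trans (List.toFinset_card_le t) hlen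
    · exact hT01
    · intro j hj; exact if_neg (fun hc => hj (List.mem_toFinset.mpr hc))
    · exact hu
  refine h1.trans ?_
  have h2 : Real.sqrt (∑ j, (if j ∈ t then h j else 0) ^ 2) ≤ Real.sqrt s0 * m := by
    have e1 : ∑ j, (if j ∈ t then h j else 0) ^ 2 = ∑ j ∈ t.toFinset, h j ^ 2 := by
      calc ∑ j, (if j ∈ t then h j else 0) ^ 2
          = ∑ j, (if j ∈ t.toFinset then h j else 0) ^ 2 :=
            Finset.sum_congr rfl (fun j _ => by simp [List.mem_toFinset])
        _ = ∑ j ∈ t.toFinset, h j ^ 2 := sumSqRestr h t.toFinset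
    have e2 : ∑ j ∈ t.toFinset, h j ^ 2 ≤ (s0 : ℝ) * m ^ 2 := by
      calc ∑ j ∈ t.toFinset, h j ^ 2 ≤ ∑ _j ∈ t.toFinset, m ^ 2 := by
            apply Finset.sum_le_sum; intro j hj
            have hj' := hmb j (List.mem_toFinset.mp hj)
            calc h j ^ 2 = |h j| ^ 2 := (sq_abs _).symm
              _ ≤ m ^ 2 := by nlinarith [abs_nonneg (h j)]
        _ = (t.toFinset.card : ℝ) * m ^ 2 := by rw [Finset.sum_const, nsmul_eq_mul]
        _ ≤ (s0 : ℝ) * m ^ 2 := by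
            apply mul_le_mul_of_nonneg_right _ (sq_nonneg m)
            exact_mod_cast le_trans (List.toFinset_card_le t) hlen
    calc Real.sqrt (∑ j, (if j ∈ t then h j else 0) ^ 2)
        ≤ Real.sqrt ((s0:ℝ) * m ^ 2) := Real.sqrt_le_sqrt (by rw [e1]; exact e2)
      _ = Real.sqrt s0 * m := by rw [Real.sqrt_mul (by positivity), Real.sqrt_sq hm]
  have h3 : θ * (n:ℝ) * Real.sqrt (∑ j, (if j ∈ t then h j else 0) ^ 2)
      ≤ θ * n * (Real.sqrt s0 * m) := mul_le_mul_of_nonneg_left h2 (by positivity)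
  exact mul_le_mul_of_nonneg_right h3 (Real.sqrt_nonneg _)

lemma chunkA {n p s0 : ℕ} (hs0 : 0 < s0) (X : Matrix (Fin n) (Fin p) ℝ) (θ : ℝ) (hθ0 : 0 ≤ θ)
    (h u : Fin p → ℝ) (T01 : Finset (Fin p)) (hT01 : T01.card ≤ 2 * s0)
    (hu : ∀ j ∉ T01, u j = 0)
    (hθ : ∀ (a b : Fin p → ℝ) (T T' : Finset (Fin p)), Disjoint T T' →
      T.card ≤ s0 → T'.card ≤ 2 * s0 →
      (∀ j ∉ T, a j = 0) → (∀ j ∉ T', b j = 0) →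
      |∑ i, (X.mulVec a i) * (X.mulVec b i)| ≤
        θ * n * Real.sqrt (∑ j, (a j) ^ 2) * Real.sqrt (∑ j, (b j) ^ 2)) :
    ∀ (N : ℕ) (l : List (Fin p)), l.length ≤ N → l.Nodup → (∀ j ∈ l, j ∉ T01) →
      l.Pairwise (fun a b => |h b| ≤ |h a|) → ∀ m : ℝ, 0 ≤ m → (∀ j ∈ l, |h j| ≤ m) →
      |∑ i, (X.mulVec (fun j => if j ∈ l then h j else 0) i) * (X.mulVec u i)| ≤
        θ * n * (Real.sqrt s0 * m + (l.map (fun j => |h j|)).sum / Real.sqrt s0) *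
          Real.sqrt (∑ j, u j ^ 2) := by
  have hs0R : (0:ℝ) < s0 := by exact_mod_cast hs0
  have hsq : (0:ℝ) < Real.sqrt s0 := Real.sqrt_pos.mpr hs0R
  have hl1 : ∀ l : List (Fin p), 0 ≤ (l.map (fun j => |h j|)).sum := by
    intro l; apply List.sum_nonneg; intro x hx
    obtain ⟨j, _, rfl⟩ := List.mem_map.mp hx; exact abs_nonneg _
  have short : ∀ (l : List (Fin p)), l.length ≤ s0 → (∀ j ∈ l, j ∉ T01) →
      ∀ m : ℝ, 0 ≤ m → (∀ j ∈ l, |h j| ≤ m) →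
      |∑ i, (X.mulVec (fun j => if j ∈ l then h j else 0) i) * (X.mulVec u i)| ≤
        θ * n * (Real.sqrt s0 * m + (l.map (fun j => |h j|)).sum / Real.sqrt s0) *
          Real.sqrt (∑ j, u j ^ 2) := by
    intro l hlen hdisj m hm hmb
    refine (chunkShort X θ hθ0 h u T01 hT01 hu hθ l hlen hdisj m hm hmb).trans ?_
    apply mul_le_mul_of_nonneg_right _ (Real.sqrt_nonneg _)
    apply mul_le_mul_of_nonneg_left _ (by positivity)
    exact le_add_of_nonneg_right (div_nonneg (hl1 l) hsq.le)
  intro N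
  induction N with
  | zero =>
    intro l hlen hnd hdisj hpw m hm hmb
    exact short l (le_trans hlen (Nat.zero_le _)) hdisj m hm hmb
  | succ N ih =>
    intro l hlen hnd hdisj hpw m hm hmb
    by_cases hls : l.length ≤ s0
    · exact short l hls hdisj m hm hmb
    · push_neg at hls
      set t := l.take s0 with ht
      set d := l.drop s0 with hd
      have htd : t ++ d = l := List.take_append_drop s0 l
      have hndtd : (t ++ d).Nodup := by rw [htd]; exact hnd
      rw [List.nodup_append] at hndtd
      obtain ⟨hndt, hndd, hdis⟩ := hndtd
      have hpwtd : (t ++ d).Pairwise (fun a b => |h b| ≤ |h a|) := by rw [htd]; exact hpw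
      rw [List.pairwise_append] at hpwtd
      obtain ⟨hpwt, hpwd, hcross⟩ := hpwtd
      have hmemsplit : ∀ j : Fin p, j ∈ l ↔ j ∈ t ∨ j ∈ d := by
        intro j; rw [← htd, List.mem_append]
      have hfsplit : (fun j => if j ∈ l then h j else 0)
          = (fun j => if j ∈ t then h j else 0) + (fun j => if j ∈ d then h j else 0) := by
        funext j
        by_cases hjt : j ∈ t
        · have hjl : j ∈ l := (hmemsplit j).mpr (Or.inl hjt)
          have hjd : j ∉ d := fun hc => hdis j hjt j hc rfl
          simp [hjl, hjt, hjd]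
        · by_cases hjd : j ∈ d
          · have hjl : j ∈ l := (hmemsplit j).mpr (Or.inr hjd)
            simp [hjl, hjt, hjd]
          · have hjl : j ∉ l := fun hc => by
              rcases (hmemsplit j).mp hc with h' | h'
              · exact hjt h'
              · exact hjd h'
            simp [hjl, hjt, hjd]
      have hsplitsum : ∑ i, (X.mulVec (fun j => if j ∈ l then h j else 0) i) * (X.mulVec u i)
          = ∑ i, (X.mulVec (fun j => if j ∈ t then h j else 0) i) * (X.mulVec u i)
            + ∑ i, (X.mulVec (fun j => if j ∈ d then h j else 0) i) * (X.mulVec u i) := by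
        rw [hfsplit, Matrix.mulVec_add]
        simp only [Pi.add_apply, add_mul]
        exact Finset.sum_add_distrib
      have htlen : t.length = s0 := by rw [ht, List.length_take]; omega
      have hdlen : d.length ≤ N := by rw [hd, List.length_drop]; omega
      have hdT01 : ∀ j ∈ d, j ∉ T01 := fun j hj => hdisj j ((hmemsplit j).mpr (Or.inr hj))
      have htT01 : ∀ j ∈ t, j ∉ T01 := fun j hj => hdisj j ((hmemsplit j).mpr (Or.inl hj))
      set m' : ℝ := (t.map (fun j => |h j|)).sum / s0 with hm'
      have hm'0 : 0 ≤ m' := div_nonneg (hl1 t) hs0R.le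
      have hdm : ∀ j ∈ d, |h j| ≤ m' := by
        intro j hj
        rw [hm', le_div_iff₀ hs0R]
        calc |h j| * s0 = ∑ _a ∈ t.toFinset, |h j| := by
              rw [Finset.sum_const, nsmul_eq_mul, List.toFinset_card_of_nodup hndt, htlen,
                mul_comm]
          _ ≤ ∑ a ∈ t.toFinset, |h a| :=
              Finset.sum_le_sum (fun a ha => hcross a (List.mem_toFinset.mp ha) j hj)
          _ = (t.map (fun j => |h j|)).sum := List.sum_toFinset _ hndt
      have hIH := ih d hdlen hndd hdT01 hpwd m' hm'0 hdm
      have hshort := chunkShort X θ hθ0 h u T01 hT01 hu hθ t (le_of_eq htlen) htT01 m hm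
        (fun j hj => hmb j ((hmemsplit j).mpr (Or.inl hj)))
      rw [hsplitsum]
      have hl1split : (l.map (fun j => |h j|)).sum
          = (t.map (fun j => |h j|)).sum + (d.map (fun j => |h j|)).sum := by
        rw [← htd, List.map_append, List.sum_append]
      have hkey : Real.sqrt s0 * m' = (t.map (fun j => |h j|)).sum / Real.sqrt s0 := by
        rw [hm']; exact sqrt_mul_div s0 hs0 _
      calc |∑ i, (X.mulVec (fun j => if j ∈ t then h j else 0) i) * (X.mulVec u i)
            + ∑ i, (X.mulVec (fun j => if j ∈ d then h j else 0) i) * (X.mulVec u i)|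
          ≤ |∑ i, (X.mulVec (fun j => if j ∈ t then h j else 0) i) * (X.mulVec u i)|
            + |∑ i, (X.mulVec (fun j => if j ∈ d then h j else 0) i) * (X.mulVec u i)| :=
            abs_add_le _ _
        _ ≤ θ * n * (Real.sqrt s0 * m) * Real.sqrt (∑ j, u j ^ 2)
            + θ * n * (Real.sqrt s0 * m' + (d.map (fun j => |h j|)).sum / Real.sqrt s0) *
              Real.sqrt (∑ j, u j ^ 2) := add_le_add hshort hIH
        _ = θ * n * (Real.sqrt s0 * m + (l.map (fun j => |h j|)).sum / Real.sqrt s0) *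
              Real.sqrt (∑ j, u j ^ 2) := by
            rw [hkey, hl1split]; ring

/-- Cone decomposition bound (Candès–Tao Lemma 3.1 generalization). -/
theorem stmt11 (n p s0 : ℕ) (hs0 : 0 < s0) (hn : 0 < n)
    (X : Matrix (Fin n) (Fin p) ℝ) (Λmin θ : ℝ) (hΛmin : 0 < Λmin) (hθ0 : 0 ≤ θ)
    (hRE : ∀ (v : Fin p → ℝ) (T : Finset (Fin p)), T.card ≤ 2 * s0 →
      (∀ j ∉ T, v j = 0) →
      Λmin * n * (∑ j, (v j) ^ 2) ≤ ∑ i, (X.mulVec v i) ^ 2)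
    (hθ : ∀ (u v : Fin p → ℝ) (T T' : Finset (Fin p)), Disjoint T T' →
      T.card ≤ s0 → T'.card ≤ 2 * s0 →
      (∀ j ∉ T, u j = 0) → (∀ j ∉ T', v j = 0) →
      |∑ i, (X.mulVec u i) * (X.mulVec v i)| ≤
        θ * n * Real.sqrt (∑ j, (u j) ^ 2) * Real.sqrt (∑ j, (v j) ^ 2))
    (h : Fin p → ℝ) (T0 T1 : Finset (Fin p)) (hT0card : T0.card = s0)
    (hT1disj : Disjoint T0 T1) (hT1card : T1.card ≤ s0)
    (hT1full : T1.card = s0 ∨ T0 ∪ T1 = Finset.univ)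
    (hT1max : ∀ j ∈ T1, ∀ k, k ∉ T0 → k ∉ T1 → |h k| ≤ |h j|) :
    Real.sqrt (∑ j ∈ T0 ∪ T1, (h j) ^ 2) ≤
      Real.sqrt (∑ i, (X.mulVec h i) ^ 2) / (Real.sqrt Λmin * Real.sqrt (n : ℝ)) +
        θ / (Real.sqrt (s0 : ℝ) * Λmin) * (∑ j ∈ T0ᶜ, |h j|) ∧
    (∑ j ∈ (T0 ∪ T1)ᶜ, (h j) ^ 2) ≤ (∑ j ∈ T0ᶜ, |h j|) ^ 2 / (s0 : ℝ) ∧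
    (∑ j, (h j) ^ 2) ≤
      (∑ j ∈ T0 ∪ T1, (h j) ^ 2) + (∑ j ∈ T0ᶜ, |h j|) ^ 2 / (s0 : ℝ) := by
  classical
  have hs0R : (0:ℝ) < s0 := by exact_mod_cast hs0
  have hsq : (0:ℝ) < Real.sqrt s0 := Real.sqrt_pos.mpr hs0R
  set T01 : Finset (Fin p) := T0 ∪ T1 with hT01def
  have hT01card : T01.card ≤ 2 * s0 := by
    calc T01.card ≤ T0.card + T1.card := Finset.card_union_le _ _
      _ ≤ 2 * s0 := by omega
  -- key: every coordinate outside T01 is dominated by the T1-average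
  have hkey : ∀ j ∈ T01ᶜ, (s0:ℝ) * |h j| ≤ ∑ k ∈ T1, |h k| := by
    intro j hj
    rcases hT1full with hcard | huniv
    · rw [Finset.mem_compl, hT01def, Finset.mem_union] at hj
      push_neg at hj
      obtain ⟨hj0, hj1⟩ := hj
      calc (s0:ℝ) * |h j| = ∑ _k ∈ T1, |h j| := by
            rw [Finset.sum_const, nsmul_eq_mul, hcard]
        _ ≤ ∑ k ∈ T1, |h k| := Finset.sum_le_sum (fun k hk => hT1max k hk j hj0 hj1)
    · exfalso
      rw [Finset.mem_compl, huniv] at hj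
      exact hj (Finset.mem_univ j)
  -- ℓ1 splitting
  have hL110 : (0:ℝ) ≤ ∑ k ∈ T1, |h k| := Finset.sum_nonneg (fun _ _ => abs_nonneg _)
  have hL1cc0 : (0:ℝ) ≤ ∑ j ∈ T01ᶜ, |h j| := Finset.sum_nonneg (fun _ _ => abs_nonneg _)
  have hT0c : T0ᶜ = T1 ∪ T01ᶜ := by
    rw [hT01def]
    ext j
    simp only [Finset.mem_compl, Finset.mem_union]
    have himp : j ∈ T1 → j ∉ T0 := fun h1 h0' => (Finset.disjoint_left.mp hT1disj h0') h1
    constructor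
    · intro hj0
      by_cases hj1 : j ∈ T1
      · exact Or.inl hj1
      · exact Or.inr (by push_neg; exact ⟨hj0, hj1⟩)
    · rintro (hj1 | hj)
      · exact himp hj1
      · push_neg at hj; exact hj.1
  have hdisj2 : Disjoint T1 T01ᶜ := by
    rw [Finset.disjoint_left]
    intro j hj hjc
    rw [Finset.mem_compl] at hjc
    exact hjc (by rw [hT01def]; exact Finset.mem_union_right _ hj)
  have hL1split : ∑ j ∈ T0ᶜ, |h j| = (∑ k ∈ T1, |h k|) + ∑ j ∈ T01ᶜ, |h j| := by
    rw [hT0c, Finset.sum_union hdisj2]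
  have hL1c0 : (0:ℝ) ≤ ∑ j ∈ T0ᶜ, |h j| := Finset.sum_nonneg (fun _ _ => abs_nonneg _)
  -- Part 2
  have part2 : (∑ j ∈ T01ᶜ, (h j) ^ 2) ≤ (∑ j ∈ T0ᶜ, |h j|) ^ 2 / (s0 : ℝ) := by
    have hstep : ∀ j ∈ T01ᶜ, h j ^ 2 ≤ ((∑ k ∈ T1, |h k|) / s0) * |h j| := by
      intro j hj
      have h1 := hkey j hj
      have h2 : |h j| ≤ (∑ k ∈ T1, |h k|) / s0 := by
        rw [le_div_iff₀ hs0R]; linarith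
      calc h j ^ 2 = |h j| * |h j| := by rw [← sq_abs, pow_two]
        _ ≤ ((∑ k ∈ T1, |h k|) / s0) * |h j| :=
            mul_le_mul_of_nonneg_right h2 (abs_nonneg _)
    calc ∑ j ∈ T01ᶜ, (h j) ^ 2
        ≤ ∑ j ∈ T01ᶜ, ((∑ k ∈ T1, |h k|) / s0) * |h j| := Finset.sum_le_sum hstep
      _ = ((∑ k ∈ T1, |h k|) / s0) * ∑ j ∈ T01ᶜ, |h j| := by rw [← Finset.mul_sum]
      _ ≤ (∑ j ∈ T0ᶜ, |h j|) ^ 2 / (s0 : ℝ) := by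
          rw [hL1split, div_mul_eq_mul_div, div_le_div_iff₀ hs0R hs0R]
          nlinarith [sq_nonneg (∑ k ∈ T1, |h k|), sq_nonneg (∑ j ∈ T01ᶜ, |h j|),
            mul_nonneg hL110 hL1cc0]
  -- Part 3
  have part3 : (∑ j, (h j) ^ 2) ≤
      (∑ j ∈ T01, (h j) ^ 2) + (∑ j ∈ T0ᶜ, |h j|) ^ 2 / (s0 : ℝ) := by
    have := Finset.sum_add_sum_compl T01 (fun j => (h j) ^ 2)
    linarith [part2]
  refine ⟨?_, part2, part3⟩
  -- Part 1
  set u : Fin p → ℝ := fun j => if j ∈ T01 then h j else 0 with hudef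
  set w : Fin p → ℝ := fun j => if j ∈ T01ᶜ then h j else 0 with hwdef
  have husupp : ∀ j ∉ T01, u j = 0 := by
    intro j hj; simp only [hudef]; exact if_neg hj
  have huw : h = u + w := by
    funext j
    by_cases hj : j ∈ T01 <;>
      simp [hudef, hwdef, hj, Finset.mem_compl]
  have hAu : ∑ j, u j ^ 2 = ∑ j ∈ T01, h j ^ 2 := by
    simp only [hudef]; exact sumSqRestr h T01
  have hA0 : (0:ℝ) ≤ ∑ j ∈ T01, h j ^ 2 := Finset.sum_nonneg (fun _ _ => sq_nonneg _)
  have hB0 : (0:ℝ) ≤ ∑ i, (X.mulVec u i) ^ 2 := Finset.sum_nonneg (fun _ _ => sq_nonneg _)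
  have hREu := hRE u T01 hT01card husupp
  rw [hAu] at hREu
  -- sorted list of T01ᶜ
  set l : List (Fin p) := ((T01ᶜ).toList).mergeSort (fun a b => decide (|h b| ≤ |h a|))
    with hldef
  have hperm : l.Perm (T01ᶜ).toList := List.mergeSort_perm (T01ᶜ).toList _
  have hmem : ∀ j, j ∈ l ↔ j ∈ T01ᶜ := by
    intro j; rw [hperm.mem_iff, Finset.mem_toList]
  have hnd : l.Nodup := (hperm.nodup_iff).mpr (Finset.nodup_toList _)
  have hpw' := List.pairwise_mergeSort (le := fun a b : Fin p => decide (|h b| ≤ |h a|))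
    (by intro a b c hab hbc; simp only [decide_eq_true_eq] at *; exact le_trans hbc hab)
    (by intro a b; simp only [Bool.or_eq_true, decide_eq_true_eq]; exact le_total _ _)
    (T01ᶜ).toList
  have hpw : l.Pairwise (fun a b => |h b| ≤ |h a|) := by
    rw [hldef]; exact hpw'.imp (fun hab => of_decide_eq_true hab)
  have hwl : w = fun j => if j ∈ l then h j else 0 := by
    funext j
    simp only [hwdef]
    by_cases hj : j ∈ T01ᶜ
    · rw [if_pos hj, if_pos ((hmem j).mpr hj)]
    · rw [if_neg hj, if_neg (fun hc => hj ((hmem j).mp hc))]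
  have hm0 : (0:ℝ) ≤ (∑ k ∈ T1, |h k|) / s0 := div_nonneg hL110 hs0R.le
  have hmb : ∀ j ∈ l, |h j| ≤ (∑ k ∈ T1, |h k|) / s0 := by
    intro j hj
    rw [le_div_iff₀ hs0R]
    have := hkey j ((hmem j).mp hj)
    linarith
  have hchunk := chunkA hs0 X θ hθ0 h u T01 hT01card husupp hθ l.length l (le_refl _) hnd
    (fun j hj => Finset.mem_compl.mp ((hmem j).mp hj)) hpw _ hm0 hmb
  rw [← hwl, hAu] at hchunk
  have hlsum : (l.map (fun j => |h j|)).sum = ∑ j ∈ T01ᶜ, |h j| := by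
    calc (l.map (fun j => |h j|)).sum
        = (((T01ᶜ).toList).map (fun j => |h j|)).sum := (hperm.map _).sum_eq
      _ = ∑ j ∈ T01ᶜ, |h j| := by
          rw [← List.sum_toFinset _ (Finset.nodup_toList _), Finset.toList_toFinset]
  rw [hlsum] at hchunk
  have hb2 : Real.sqrt s0 * ((∑ k ∈ T1, |h k|) / s0) + (∑ j ∈ T01ᶜ, |h j|) / Real.sqrt s0
      = (∑ j ∈ T0ᶜ, |h j|) / Real.sqrt s0 := by
    rw [sqrt_mul_div s0 hs0, hL1split, add_div]
  rw [hb2] at hchunk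
  -- hchunk : |∑ i, X.mulVec w i * X.mulVec u i| ≤ θ n (ℓ1/√s0) √A
  have hcomm : ∑ i, X.mulVec w i * X.mulVec u i = ∑ i, X.mulVec u i * X.mulVec w i :=
    Finset.sum_congr rfl (fun i _ => mul_comm _ _)
  rw [hcomm] at hchunk
  -- Cauchy–Schwarz
  set K : ℝ := Real.sqrt (∑ i, (X.mulVec h i) ^ 2) with hKdef
  have hK0 : 0 ≤ K := Real.sqrt_nonneg _
  have hCS : ∑ i, X.mulVec u i * X.mulVec h i ≤ Real.sqrt (∑ i, (X.mulVec u i) ^ 2) * K := by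
    have h1 := Finset.sum_mul_sq_le_sq_mul_sq Finset.univ (X.mulVec u) (X.mulVec h)
    calc ∑ i, X.mulVec u i * X.mulVec h i
        ≤ |∑ i, X.mulVec u i * X.mulVec h i| := le_abs_self _
      _ = Real.sqrt ((∑ i, X.mulVec u i * X.mulVec h i) ^ 2) := (Real.sqrt_sq_eq_abs _).symm
      _ ≤ Real.sqrt ((∑ i, (X.mulVec u i) ^ 2) * ∑ i, (X.mulVec h i) ^ 2) :=
          Real.sqrt_le_sqrt h1
      _ = Real.sqrt (∑ i, (X.mulVec u i) ^ 2) * K := Real.sqrt_mul hB0 _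
  -- B identity
  have hBid : ∑ i, X.mulVec u i * X.mulVec h i
      = (∑ i, (X.mulVec u i) ^ 2) + ∑ i, X.mulVec u i * X.mulVec w i := by
    have e : X.mulVec h = X.mulVec u + X.mulVec w := by rw [huw, Matrix.mulVec_add]
    rw [e]
    simp only [Pi.add_apply, mul_add]
    rw [Finset.sum_add_distrib]
    congr 1
    exact Finset.sum_congr rfl (fun i _ => (pow_two _).symm)
  have hBle : (∑ i, (X.mulVec u i) ^ 2) ≤
      Real.sqrt (∑ i, (X.mulVec u i) ^ 2) * K
        + θ * n * ((∑ j ∈ T0ᶜ, |h j|) / Real.sqrt s0) * Real.sqrt (∑ j ∈ T01, h j ^ 2) := by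
    have h2 := (abs_le.mp hchunk).1
    linarith [hCS]
  -- quadratic argument
  set L : ℝ := Real.sqrt Λmin * Real.sqrt (n:ℝ) with hLdef
  have hL : 0 < L := mul_pos (Real.sqrt_pos.mpr hΛmin)
    (Real.sqrt_pos.mpr (by exact_mod_cast hn))
  have hLL : L * L = Λmin * n := by
    rw [hLdef, mul_mul_mul_comm, Real.mul_self_sqrt hΛmin.le,
      Real.mul_self_sqrt (Nat.cast_nonneg n)]
  have hbb : Real.sqrt (∑ i, (X.mulVec u i) ^ 2) * Real.sqrt (∑ i, (X.mulVec u i) ^ 2)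
      = ∑ i, (X.mulVec u i) ^ 2 := Real.mul_self_sqrt hB0
  have hab : L * Real.sqrt (∑ j ∈ T01, h j ^ 2) ≤ Real.sqrt (∑ i, (X.mulVec u i) ^ 2) := by
    have e : Real.sqrt (Λmin * n * (∑ j ∈ T01, h j ^ 2))
        = L * Real.sqrt (∑ j ∈ T01, h j ^ 2) := by
      rw [Real.sqrt_mul (by positivity), Real.sqrt_mul hΛmin.le, hLdef]
    rw [← e]
    exact Real.sqrt_le_sqrt hREu
  set TD : ℝ := θ / (Real.sqrt (s0:ℝ) * Λmin) * (∑ j ∈ T0ᶜ, |h j|) with hTDdef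
  have hTD0 : 0 ≤ TD := by
    rw [hTDdef]
    exact mul_nonneg (div_nonneg hθ0 (by positivity)) hL1c0
  have hDeq : θ * (n:ℝ) * ((∑ j ∈ T0ᶜ, |h j|) / Real.sqrt s0) = TD * (Λmin * n) := by
    rw [hTDdef]
    field_simp
  have hnR : (0:ℝ) < n := by exact_mod_cast hn
  rcases le_or_gt (L * Real.sqrt (∑ j ∈ T01, h j ^ 2)) K with hc | hc
  · have h1 : Real.sqrt (∑ j ∈ T01, h j ^ 2) ≤ K / L := by
      rw [le_div_iff₀ hL, mul_comm]; exact hc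
    linarith
  · have ha0 : 0 < Real.sqrt (∑ j ∈ T01, h j ^ 2) := by
      rcases (Real.sqrt_nonneg (∑ j ∈ T01, h j ^ 2)).lt_or_eq with h' | h'
      · exact h'
      · exfalso; rw [← h', mul_zero] at hc; exact absurd hc (not_lt.mpr hK0)
    have hstep : Real.sqrt (∑ i, (X.mulVec u i) ^ 2) *
        (L * Real.sqrt (∑ j ∈ T01, h j ^ 2) - K)
        ≤ θ * n * ((∑ j ∈ T0ᶜ, |h j|) / Real.sqrt s0) * Real.sqrt (∑ j ∈ T01, h j ^ 2) := by
      have h1 : Real.sqrt (∑ i, (X.mulVec u i) ^ 2) * (L * Real.sqrt (∑ j ∈ T01, h j ^ 2))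
          ≤ Real.sqrt (∑ i, (X.mulVec u i) ^ 2) * Real.sqrt (∑ i, (X.mulVec u i) ^ 2) :=
        mul_le_mul_of_nonneg_left hab (Real.sqrt_nonneg _)
      rw [hbb] at h1
      have h2 : Real.sqrt (∑ i, (X.mulVec u i) ^ 2) *
          (L * Real.sqrt (∑ j ∈ T01, h j ^ 2) - K)
          = Real.sqrt (∑ i, (X.mulVec u i) ^ 2) * (L * Real.sqrt (∑ j ∈ T01, h j ^ 2))
            - Real.sqrt (∑ i, (X.mulVec u i) ^ 2) * K := by ring
      rw [h2]
      linarith [hBle]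
    have hstep2 : (L * Real.sqrt (∑ j ∈ T01, h j ^ 2)) *
        (L * Real.sqrt (∑ j ∈ T01, h j ^ 2) - K)
        ≤ θ * n * ((∑ j ∈ T0ᶜ, |h j|) / Real.sqrt s0) * Real.sqrt (∑ j ∈ T01, h j ^ 2) :=
      le_trans (mul_le_mul_of_nonneg_right hab (by linarith)) hstep
    rw [hDeq, ← hLL] at hstep2
    have hstep3 : (L * L * Real.sqrt (∑ j ∈ T01, h j ^ 2)) * Real.sqrt (∑ j ∈ T01, h j ^ 2)
        ≤ (L * K + TD * (L * L)) * Real.sqrt (∑ j ∈ T01, h j ^ 2) := by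
      linarith [hstep2]
    have hstep4 : L * L * Real.sqrt (∑ j ∈ T01, h j ^ 2) ≤ L * K + TD * (L * L) :=
      le_of_mul_le_mul_right hstep3 ha0
    have h5 : Real.sqrt (∑ j ∈ T01, h j ^ 2) * L ≤ K + TD * L := by
      apply le_of_mul_le_mul_left _ hL
      linarith [hstep4]
    calc Real.sqrt (∑ j ∈ T01, h j ^ 2) ≤ (K + TD * L) / L := (le_div_iff₀ hL).mpr h5
      _ = K / L + TD := by field_simp
end

section
/- If h ∈ ℝ^p, T_0 has size s_0, and T_1 is the set of the s_0 largest |h_j| over j ∉ T_0, then the k-th largest value (for k ≥ s_0+1) of |h| on T_0^c is at most ‖h_{T_0^c}‖₁/k, and consequently ‖h_{(T_0∪T_1)^c}‖₂² ≤ ‖h_{T_0^c}‖₁² ∑_{k≥s_0+1} 1/k² ≤ ‖h_{T_0^c}‖₁²/s_0. -/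
lemma aux_tsum (c : ℝ) (hc : 1 ≤ c) :
    1 / c ≤ ∑' k : ℕ, 1 / ((k : ℝ) + c) ^ 2 := by
  have hc0 : 0 < c := lt_of_lt_of_le one_pos hc
  have hpos : ∀ k : ℕ, (0:ℝ) < (k : ℝ) + c := fun k => by positivity
  -- telescoping hassum
  have hts : HasSum (fun k : ℕ => 1 / ((k:ℝ) + c) - 1 / ((k:ℝ) + c + 1)) (1 / c) := by
    rw [hasSum_iff_tendsto_nat_of_nonneg]
    · have hsum : ∀ n : ℕ, ∑ i ∈ Finset.range n, (1 / ((i:ℝ) + c) - 1 / ((i:ℝ) + c + 1))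
          = 1 / c - 1 / ((n:ℝ) + c) := by
        intro n
        have := Finset.sum_range_sub' (f := fun i : ℕ => 1 / ((i:ℝ) + c)) n
        simp only [Nat.cast_add, Nat.cast_one, Nat.cast_zero, zero_add] at this
        rw [← this]
        exact Finset.sum_congr rfl fun i _ => by ring
      simp only [hsum]
      have : Filter.Tendsto (fun n : ℕ => 1 / ((n:ℝ) + c)) Filter.atTop (nhds 0) := by
        simp only [one_div]
        exact (Filter.tendsto_atTop_add_const_right _ c tendsto_natCast_atTop_atTop).inv_tendsto_atTop
      simpa using (tendsto_const_nhds (x := 1/c)).sub this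
    · intro i
      have h1 : (0:ℝ) < (i:ℝ) + c := hpos i
      have h2 : (i:ℝ) + c ≤ (i:ℝ) + c + 1 := by linarith
      have := one_div_le_one_div_of_le h1 h2
      linarith
  have hsummable : Summable (fun k : ℕ => 1 / ((k:ℝ) + c) ^ 2) := by
    have hbase : Summable (fun k : ℕ => 1 / ((k:ℝ) + 1) ^ 2) := by
      have := (summable_nat_add_iff 1).2 (Real.summable_one_div_nat_pow.2 (by norm_num : 1 < 2))
      simpa using this
    apply Summable.of_nonneg_of_le (fun k => by positivity) _ hbase
    intro k
    have h1 : (0:ℝ) < (k:ℝ) + 1 := by positivity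
    gcongr
  rw [← hts.tsum_eq]
  apply Summable.tsum_le_tsum _ hts.summable hsummable
  intro k
  have h1 : (0:ℝ) < (k:ℝ) + c := hpos k
  have h2 : (0:ℝ) < (k:ℝ) + c + 1 := by linarith
  rw [div_sub_div _ _ (ne_of_gt h1) (ne_of_gt h2)]
  rw [div_le_div_iff₀ (by positivity) (by positivity)]
  ring_nf
  nlinarith [sq_nonneg ((k:ℝ)+c)]



/-- The k-th largest value of |h| on T0ᶜ is at most ‖h_{T0ᶜ}‖₁/k, and the
tail energy bound ‖h_{(T0∪T1)ᶜ}‖₂² ≤ ‖h_{T0ᶜ}‖₁² ∑_{k ≥ s0+1} 1/k²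
≤ ‖h_{T0ᶜ}‖₁²/s0. -/
theorem stmt12 (p s0 : ℕ) (hs0 : 0 < s0) (h : Fin p → ℝ)
    (T0 T1 : Finset (Fin p)) (hT0card : T0.card = s0)
    (hT1disj : Disjoint T0 T1) (hT1card : T1.card ≤ s0)
    (hT1full : T1.card = s0 ∨ T0 ∪ T1 = Finset.univ)
    (hT1max : ∀ j ∈ T1, ∀ k, k ∉ T0 → k ∉ T1 → |h k| ≤ |h j|) :
    (∀ j, j ∉ T0 → ∀ K : Finset (Fin p),
      (∀ i ∈ K, i ∉ T0 ∧ |h j| ≤ |h i|) →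
      (K.card : ℝ) * |h j| ≤ ∑ i ∈ T0ᶜ, |h i|) ∧
    (∑ j ∈ (T0 ∪ T1)ᶜ, (h j) ^ 2) ≤
      (∑ i ∈ T0ᶜ, |h i|) ^ 2 * (∑' k : ℕ, 1 / ((k : ℝ) + (s0 : ℝ) + 1) ^ 2) ∧
    (∑ j ∈ (T0 ∪ T1)ᶜ, (h j) ^ 2) ≤ (∑ i ∈ T0ᶜ, |h i|) ^ 2 / (s0 : ℝ) := by
  set S : ℝ := ∑ i ∈ T0ᶜ, |h i| with hS
  have hSnonneg : 0 ≤ S := Finset.sum_nonneg fun i _ => abs_nonneg _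
  have htsum_nonneg : 0 ≤ ∑' k : ℕ, 1 / ((k : ℝ) + (s0 : ℝ) + 1) ^ 2 :=
    tsum_nonneg fun k => by positivity
  have part1 : ∀ j, j ∉ T0 → ∀ K : Finset (Fin p),
      (∀ i ∈ K, i ∉ T0 ∧ |h j| ≤ |h i|) →
      (K.card : ℝ) * |h j| ≤ S := by
    intro j hj K hK
    calc (K.card : ℝ) * |h j| = ∑ _i ∈ K, |h j| := by
          rw [Finset.sum_const, nsmul_eq_mul]
      _ ≤ ∑ i ∈ K, |h i| := Finset.sum_le_sum fun i hi => (hK i hi).2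
      _ ≤ S := Finset.sum_le_sum_of_subset_of_nonneg
          (fun i hi => Finset.mem_compl.2 (hK i hi).1)
          (fun i _ _ => abs_nonneg _)
  refine ⟨part1, ?_⟩
  -- key bound
  have key : ∑ j ∈ (T0 ∪ T1)ᶜ, (h j) ^ 2 ≤ S ^ 2 / ((s0 : ℝ) + 1) := by
    rcases hT1full with hfull | huniv
    · -- each |h j| on (T0∪T1)ᶜ is ≤ S/(s0+1)
      have hbd : ∀ j ∈ (T0 ∪ T1)ᶜ, |h j| ≤ S / ((s0 : ℝ) + 1) := by
        intro j hj
        rw [Finset.mem_compl, Finset.mem_union] at hj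
        push_neg at hj
        obtain ⟨hj0, hj1⟩ := hj
        have hins : insert j T1 ⊆ T0ᶜ := by
          intro i hi
          rw [Finset.mem_insert] at hi
          rcases hi with rfl | hi
          · exact Finset.mem_compl.2 hj0
          · exact Finset.mem_compl.2 fun hc => (Finset.disjoint_left.1 hT1disj hc) hi
        have hsum : ∑ i ∈ insert j T1, |h i| ≤ S :=
          Finset.sum_le_sum_of_subset_of_nonneg hins (fun i _ _ => abs_nonneg _)
        rw [Finset.sum_insert hj1] at hsum
        have hT1sum : (s0 : ℝ) * |h j| ≤ ∑ i ∈ T1, |h i| := by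
          calc (s0 : ℝ) * |h j| = ∑ _i ∈ T1, |h j| := by
                rw [Finset.sum_const, nsmul_eq_mul, hfull]
            _ ≤ ∑ i ∈ T1, |h i| :=
                Finset.sum_le_sum fun i hi => hT1max i hi j hj0 hj1
        rw [le_div_iff₀ (by positivity)]
        linarith
      calc ∑ j ∈ (T0 ∪ T1)ᶜ, (h j) ^ 2
          ≤ ∑ j ∈ (T0 ∪ T1)ᶜ, (S / ((s0 : ℝ) + 1)) * |h j| := by
            apply Finset.sum_le_sum
            intro j hj
            calc (h j) ^ 2 = |h j| * |h j| := by rw [← sq_abs]; ring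
              _ ≤ (S / ((s0 : ℝ) + 1)) * |h j| :=
                  mul_le_mul_of_nonneg_right (hbd j hj) (abs_nonneg _)
        _ = (S / ((s0 : ℝ) + 1)) * ∑ j ∈ (T0 ∪ T1)ᶜ, |h j| := by
            rw [Finset.mul_sum]
        _ ≤ (S / ((s0 : ℝ) + 1)) * S := by
            apply mul_le_mul_of_nonneg_left _ (by positivity)
            exact Finset.sum_le_sum_of_subset_of_nonneg
              (Finset.compl_subset_compl.2 Finset.subset_union_left)
              (fun i _ _ => abs_nonneg _)
        _ = S ^ 2 / ((s0 : ℝ) + 1) := by ring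
    · rw [huniv, Finset.compl_univ, Finset.sum_empty]
      positivity
  constructor
  · -- via tsum
    have htsum : 1 / ((s0 : ℝ) + 1) ≤ ∑' k : ℕ, 1 / ((k : ℝ) + (s0 : ℝ) + 1) ^ 2 := by
      have := aux_tsum ((s0 : ℝ) + 1) (by exact_mod_cast Nat.succ_le_succ (Nat.zero_le s0))
      have heq : (fun k : ℕ => 1 / ((k : ℝ) + (s0 : ℝ) + 1) ^ 2)
          = fun k : ℕ => 1 / ((k : ℝ) + ((s0 : ℝ) + 1)) ^ 2 := by
        funext k; ring_nf
      rw [heq]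
      exact this
    calc ∑ j ∈ (T0 ∪ T1)ᶜ, (h j) ^ 2 ≤ S ^ 2 / ((s0 : ℝ) + 1) := key
      _ = S ^ 2 * (1 / ((s0 : ℝ) + 1)) := by ring
      _ ≤ S ^ 2 * (∑' k : ℕ, 1 / ((k : ℝ) + (s0 : ℝ) + 1) ^ 2) := by
          apply mul_le_mul_of_nonneg_left htsum (by positivity)
  · calc ∑ j ∈ (T0 ∪ T1)ᶜ, (h j) ^ 2 ≤ S ^ 2 / ((s0 : ℝ) + 1) := key
      _ ≤ S ^ 2 / (s0 : ℝ) := by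
          apply div_le_div_of_nonneg_left (by positivity) (by positivity)
          linarith
end

section
/- Prediction error of the thresholded OLS estimator: let I ⊆ {1,...,p} with |I| ≤ 2s_0, D = I^c, β̂_I = (X_IᵀX_I)^{-1}X_IᵀY the OLS estimator, Y = Xβ + ε. If ‖β_D‖₂ ≤ C√s_0·λσ, ‖Xᵀε/n‖_∞ ≤ λ_{σ,a,p} = √(1+a)·λσ, Λ_max(s) bounds the restricted largest eigenvalue over s-sparse vectors, and Λ_min(|I|), Λ_max(|I|) bound the eigenvalues of X_IᵀX_I/n, then ‖Xβ̂_I − Xβ‖₂/√n ≤ √(Λ_max(s))·‖β_D‖₂ + √(|I|Λ_max(|I|))·λ_{σ,a,p}/Λ_min(|I|) ≤ C'·λσ·√s_0 for some constant C' depending on C, a and the eigenvalue bounds. -/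
set_option maxHeartbeats 1000000

private lemma swap_sum {n p : ℕ} (X : Matrix (Fin n) (Fin p) ℝ) (u : Fin p → ℝ)
    (w : Fin n → ℝ) :
    ∑ i, (X.mulVec u i) * w i = ∑ j, u j * (∑ i, X i j * w i) := by
  simp only [Matrix.mulVec, dotProduct, Finset.sum_mul, Finset.mul_sum]
  rw [Finset.sum_comm]
  apply Finset.sum_congr rfl
  intro j _
  apply Finset.sum_congr rfl
  intro i _
  ring

/-- Prediction error of the thresholded OLS estimator. -/
theorem stmt14 (n p s s0 : ℕ) (hn : 0 < n)
    (X : Matrix (Fin n) (Fin p) ℝ) (Y : Fin n → ℝ) (β : Fin p → ℝ)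
    (ε : Fin n → ℝ) (hY : ∀ i, Y i = X.mulVec β i + ε i)
    (I : Finset (Fin p)) (hIcard : I.card ≤ 2 * s0)
    (C a lam σ lamnoise Λmaxs ΛminI ΛmaxI : ℝ)
    (ha : 0 ≤ a) (hlam : 0 < lam) (hσ : 0 < σ) (hC : 0 ≤ C)
    (hΛminI : 0 < ΛminI) (hΛmaxs : 0 ≤ Λmaxs)
    (hlamnoise : lamnoise = Real.sqrt (1 + a) * lam * σ)
    (hΛmaxsRE : ∀ (v : Fin p → ℝ) (T : Finset (Fin p)), T.card ≤ s →
      (∀ j ∉ T, v j = 0) →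
      ∑ i, (X.mulVec v i) ^ 2 ≤ Λmaxs * n * (∑ j, (v j) ^ 2))
    (hIRE : ∀ v : Fin p → ℝ, (∀ j ∉ I, v j = 0) →
      ΛminI * n * (∑ j, (v j) ^ 2) ≤ ∑ i, (X.mulVec v i) ^ 2 ∧
      ∑ i, (X.mulVec v i) ^ 2 ≤ ΛmaxI * n * (∑ j, (v j) ^ 2))
    (hβDsparse : ∃ T : Finset (Fin p), T.card ≤ s ∧ ∀ j ∉ T, j ∈ I ∨ β j = 0)
    (hβD : Real.sqrt (∑ j ∈ Iᶜ, (β j) ^ 2) ≤ C * Real.sqrt (s0 : ℝ) * lam * σ)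
    (hnoise : ∀ j, |∑ i, X i j * ε i| / n ≤ lamnoise)
    (βhat : Fin p → ℝ) (hβhatsupp : ∀ j ∉ I, βhat j = 0)
    (hnormal : ∀ j ∈ I, ∑ i, X i j * (Y i - X.mulVec βhat i) = 0) :
    Real.sqrt (∑ i, (X.mulVec βhat i - X.mulVec β i) ^ 2) / Real.sqrt (n : ℝ) ≤
      Real.sqrt Λmaxs * Real.sqrt (∑ j ∈ Iᶜ, (β j) ^ 2) +
        Real.sqrt ((I.card : ℝ) * ΛmaxI) * lamnoise / ΛminI ∧
    Real.sqrt (∑ i, (X.mulVec βhat i - X.mulVec β i) ^ 2) / Real.sqrt (n : ℝ) ≤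
      (Real.sqrt Λmaxs * C + Real.sqrt (2 * (1 + a) * ΛmaxI) / ΛminI) *
        lam * σ * Real.sqrt (s0 : ℝ) := by
  have hn' : (0:ℝ) < n := by exact_mod_cast hn
  have hlamnoise0 : 0 < lamnoise := by
    rw [hlamnoise]
    have : 0 < Real.sqrt (1 + a) := Real.sqrt_pos.2 (by linarith)
    positivity
  -- decomposition
  set βI : Fin p → ℝ := fun j => if j ∈ I then β j else 0 with hβI
  set βD : Fin p → ℝ := fun j => if j ∈ I then 0 else β j with hβDdef
  set u : Fin p → ℝ := fun j => βhat j - βI j with hu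
  have husupp : ∀ j ∉ I, u j = 0 := by
    intro j hj
    simp [hu, hβI, hj, hβhatsupp j hj]
  have hβsplit : ∀ j, β j = βI j + βD j := by
    intro j; by_cases hj : j ∈ I <;> simp [hβI, hβDdef, hj]
  have hmv : ∀ i, X.mulVec βhat i - X.mulVec β i = X.mulVec u i - X.mulVec βD i := by
    intro i
    simp only [Matrix.mulVec, dotProduct, hu]
    rw [← Finset.sum_sub_distrib, ← Finset.sum_sub_distrib]
    apply Finset.sum_congr rfl
    intro j _
    rw [hβsplit j]
    ring
  clear hβsplit
  -- abbreviations
  set t2 : ℝ := ∑ i, (X.mulVec u i) ^ 2 with ht2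
  set b2 : ℝ := ∑ i, (X.mulVec βD i) ^ 2 with hb2
  set r2 : ℝ := ∑ i, (X.mulVec βhat i - X.mulVec β i) ^ 2 with hr2
  set E : ℝ := ∑ i, (X.mulVec u i) * ε i with hE
  set S : ℝ := ∑ j, (u j) ^ 2 with hS
  have hb2nonneg : 0 ≤ b2 := Finset.sum_nonneg fun i _ => sq_nonneg _
  have ht2nonneg : 0 ≤ t2 := Finset.sum_nonneg fun i _ => sq_nonneg _
  have hr2nonneg : 0 ≤ r2 := Finset.sum_nonneg fun i _ => sq_nonneg _
  have hSnonneg : 0 ≤ S := Finset.sum_nonneg fun j _ => sq_nonneg _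
  -- normal equations rewritten
  have hNE : ∀ j ∈ I, ∑ i, X i j * (X.mulVec βD i) =
      (∑ i, X i j * (X.mulVec u i)) - ∑ i, X i j * ε i := by
    intro j hj
    have h0 := hnormal j hj
    have hYi : ∀ i, Y i - X.mulVec βhat i = ε i - (X.mulVec u i - X.mulVec βD i) := by
      intro i
      have := hmv i
      rw [hY i]
      linarith
    have : ∑ i, X i j * (ε i - (X.mulVec u i - X.mulVec βD i)) = 0 := by
      rw [← h0]; apply Finset.sum_congr rfl; intro i _; rw [hYi i]
    have hsplit : ∑ i, X i j * (ε i - (X.mulVec u i - X.mulVec βD i)) =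
        (∑ i, X i j * ε i) - ((∑ i, X i j * (X.mulVec u i)) - ∑ i, X i j * (X.mulVec βD i)) := by
      rw [← Finset.sum_sub_distrib, ← Finset.sum_sub_distrib]
      apply Finset.sum_congr rfl; intro i _; ring
    rw [hsplit] at this
    linarith
  -- inner product identity : ⟨Xu, XβD⟩ = t2 - E
  have hinner : ∑ i, (X.mulVec u i) * (X.mulVec βD i) = t2 - E := by
    rw [swap_sum X u (fun i => X.mulVec βD i)]
    have h1 : ∑ j, u j * (∑ i, X i j * X.mulVec βD i) =
        ∑ j, u j * ((∑ i, X i j * (X.mulVec u i)) - ∑ i, X i j * ε i) := by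
      apply Finset.sum_congr rfl
      intro j _
      by_cases hj : j ∈ I
      · rw [hNE j hj]
      · rw [husupp j hj]; ring
    rw [h1]
    have h2 : ∑ j, u j * ((∑ i, X i j * (X.mulVec u i)) - ∑ i, X i j * ε i) =
        (∑ j, u j * (∑ i, X i j * (X.mulVec u i))) - ∑ j, u j * (∑ i, X i j * ε i) := by
      rw [← Finset.sum_sub_distrib]
      apply Finset.sum_congr rfl; intro j _; ring
    rw [h2, ← swap_sum X u (fun i => X.mulVec u i), ← swap_sum X u ε]
    rw [ht2, hE]
    congr 1
    apply Finset.sum_congr rfl; intro i _; ring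
  -- key identity: r2 = b2 - t2 + 2 E
  have hkey : r2 = b2 - t2 + 2 * E := by
    have : r2 = t2 - 2 * (∑ i, (X.mulVec u i) * (X.mulVec βD i)) + b2 := by
      rw [hr2, ht2, hb2, Finset.mul_sum, ← Finset.sum_sub_distrib, ← Finset.sum_add_distrib]
      apply Finset.sum_congr rfl
      intro i _
      rw [hmv i]
      ring
    rw [hinner] at this
    linarith
  -- bound on E
  have hEbound : E ≤ Real.sqrt I.card * Real.sqrt S * (n * lamnoise) := by
    have h1 : E = ∑ j, u j * (∑ i, X i j * ε i) := swap_sum X u ε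
    have h2 : E = ∑ j ∈ I, u j * (∑ i, X i j * ε i) := by
      rw [h1]
      rw [← Finset.sum_subset (Finset.subset_univ I)]
      intro j _ hj
      rw [husupp j hj]; ring
    have h3 : E ≤ ∑ j ∈ I, |u j| * (n * lamnoise) := by
      rw [h2]
      apply Finset.sum_le_sum
      intro j _
      calc u j * (∑ i, X i j * ε i) ≤ |u j * (∑ i, X i j * ε i)| := le_abs_self _
        _ = |u j| * |∑ i, X i j * ε i| := abs_mul _ _
        _ ≤ |u j| * (n * lamnoise) := by
            apply mul_le_mul_of_nonneg_left _ (abs_nonneg _)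
            have := hnoise j
            rw [div_le_iff₀ hn'] at this
            linarith [this]
    have h4 : ∑ j ∈ I, |u j| ≤ Real.sqrt I.card * Real.sqrt S := by
      have hcs : (∑ j ∈ I, |u j|) ^ 2 ≤ (I.card : ℝ) * ∑ j ∈ I, |u j| ^ 2 :=
        sq_sum_le_card_mul_sum_sq
      have h5 : ∑ j ∈ I, |u j| ^ 2 ≤ S := by
        rw [hS]
        calc ∑ j ∈ I, |u j| ^ 2 = ∑ j ∈ I, (u j) ^ 2 :=
              Finset.sum_congr rfl fun j _ => by rw [sq_abs]
          _ ≤ ∑ j, (u j) ^ 2 :=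
              Finset.sum_le_sum_of_subset_of_nonneg (Finset.subset_univ I)
                fun j _ _ => sq_nonneg _
      have h6 : (∑ j ∈ I, |u j|) ^ 2 ≤ (I.card : ℝ) * S := by
        calc (∑ j ∈ I, |u j|) ^ 2 ≤ (I.card : ℝ) * ∑ j ∈ I, |u j| ^ 2 := hcs
          _ ≤ (I.card : ℝ) * S := by
              apply mul_le_mul_of_nonneg_left h5 (Nat.cast_nonneg _)
      calc ∑ j ∈ I, |u j| ≤ Real.sqrt ((∑ j ∈ I, |u j|) ^ 2) := by
            rw [Real.sqrt_sq (Finset.sum_nonneg fun j _ => abs_nonneg _)]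
        _ ≤ Real.sqrt ((I.card : ℝ) * S) := Real.sqrt_le_sqrt h6
        _ = Real.sqrt I.card * Real.sqrt S := Real.sqrt_mul (Nat.cast_nonneg _) _
    calc E ≤ ∑ j ∈ I, |u j| * (n * lamnoise) := h3
      _ = (∑ j ∈ I, |u j|) * (n * lamnoise) := by rw [Finset.sum_mul]
      _ ≤ Real.sqrt I.card * Real.sqrt S * (n * lamnoise) := by
          apply mul_le_mul_of_nonneg_right h4 (by positivity)
  -- restricted eigenvalue bounds for u
  obtain ⟨huL, huU⟩ := hIRE u husupp
  -- √S ≤ √t2 / √(ΛminI * n)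
  have hSle : Real.sqrt S * Real.sqrt (ΛminI * n) ≤ Real.sqrt t2 := by
    rw [← Real.sqrt_mul hSnonneg]
    apply Real.sqrt_le_sqrt
    rw [ht2]
    calc S * (ΛminI * n) = ΛminI * n * S := by ring
      _ ≤ ∑ i, (X.mulVec u i) ^ 2 := huL
  -- κ := the coefficient
  set κ : ℝ := Real.sqrt I.card * (n * lamnoise) / Real.sqrt (ΛminI * n) with hκ
  have hκnonneg : 0 ≤ κ := by
    rw [hκ]; positivity
  have hsqrtmin : 0 < Real.sqrt (ΛminI * n) := Real.sqrt_pos.2 (by positivity)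
  have hEbound2 : E ≤ κ * Real.sqrt t2 := by
    calc E ≤ Real.sqrt I.card * Real.sqrt S * (n * lamnoise) := hEbound
      _ = (Real.sqrt I.card * (n * lamnoise) / Real.sqrt (ΛminI * n)) *
            (Real.sqrt S * Real.sqrt (ΛminI * n)) := by
          field_simp
      _ ≤ κ * Real.sqrt t2 := by
          rw [hκ]
          apply mul_le_mul_of_nonneg_left hSle
          positivity
  -- complete the square
  have hr2bound : r2 ≤ b2 + κ ^ 2 := by
    have hts : Real.sqrt t2 ^ 2 = t2 := Real.sq_sqrt ht2nonneg
    nlinarith [sq_nonneg (Real.sqrt t2 - κ), hkey, hEbound2]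
  -- κ² value
  have hκsq : κ ^ 2 = (I.card : ℝ) * n * lamnoise ^ 2 / ΛminI := by
    rw [hκ]
    rw [div_pow, mul_pow, Real.sq_sqrt (Nat.cast_nonneg _), Real.sq_sqrt (by positivity : (0:ℝ) ≤ ΛminI * n)]
    field_simp
  -- ΛmaxI vs ΛminI when I nonempty
  have hΛle : I.Nonempty → ΛminI ≤ ΛmaxI := by
    rintro ⟨j₀, hj₀⟩
    set v : Fin p → ℝ := fun j => if j = j₀ then 1 else 0 with hv
    have hvsupp : ∀ j ∉ I, v j = 0 := by
      intro j hj
      rw [hv]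
      simp only
      rw [if_neg]
      rintro rfl; exact hj hj₀
    have hvsum : ∑ j, (v j) ^ 2 = 1 := by
      rw [hv]
      simp [Finset.sum_ite_eq']
    obtain ⟨hL, hU⟩ := hIRE v hvsupp
    rw [hvsum] at hL hU
    simp only [mul_one] at hL hU
    have := hL.trans hU
    have h := le_of_mul_le_mul_right this hn'
    exact h
  -- first bound
  set A : ℝ := Real.sqrt Λmaxs * Real.sqrt (∑ j ∈ Iᶜ, (β j) ^ 2) with hA
  set B : ℝ := Real.sqrt ((I.card : ℝ) * ΛmaxI) * lamnoise / ΛminI with hB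
  have hAnonneg : 0 ≤ A := by rw [hA]; positivity
  have hBnonneg : 0 ≤ B := by rw [hB]; positivity
  -- b2 ≤ A² n
  have hβDsum : ∑ j, (βD j) ^ 2 = ∑ j ∈ Iᶜ, (β j) ^ 2 := by
    rw [← Finset.sum_add_sum_compl I (fun j => (βD j) ^ 2)]
    have h1 : ∑ j ∈ I, (βD j) ^ 2 = 0 :=
      Finset.sum_eq_zero fun j hj => by simp [hβDdef, hj]
    rw [h1, zero_add]
    exact Finset.sum_congr rfl fun j hj => by
      rw [Finset.mem_compl] at hj
      simp [hβDdef, hj]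
  have hb2le : b2 ≤ A ^ 2 * n := by
    obtain ⟨T, hT, hTsupp⟩ := hβDsparse
    have hβDsupp : ∀ j ∉ T, βD j = 0 := by
      intro j hj
      rcases hTsupp j hj with h | h
      · simp [hβDdef, h]
      · by_cases hjI : j ∈ I <;> simp [hβDdef, hjI, h]
    have := hΛmaxsRE βD T hT hβDsupp
    rw [hβDsum] at this
    have hsum0 : 0 ≤ ∑ j ∈ Iᶜ, (β j) ^ 2 := Finset.sum_nonneg fun j _ => sq_nonneg _
    have hA2 : A ^ 2 = Λmaxs * (∑ j ∈ Iᶜ, (β j) ^ 2) := by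
      rw [hA, mul_pow, Real.sq_sqrt hΛmaxs, Real.sq_sqrt hsum0]
    rw [hb2, hA2]
    calc ∑ i, (X.mulVec βD i) ^ 2 ≤ Λmaxs * n * (∑ j ∈ Iᶜ, (β j) ^ 2) := this
      _ = Λmaxs * (∑ j ∈ Iᶜ, (β j) ^ 2) * n := by ring
  -- κ² ≤ B² n
  have hκsqle : κ ^ 2 ≤ B ^ 2 * n := by
    rcases Finset.eq_empty_or_nonempty I with hIe | hIne
    · rw [hκsq, hIe]
      simp only [Finset.card_empty, Nat.cast_zero, zero_mul, zero_div]
      positivity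
    · have hmaxpos : 0 < ΛmaxI := lt_of_lt_of_le hΛminI (hΛle hIne)
      have hB2 : B ^ 2 = (I.card : ℝ) * ΛmaxI * lamnoise ^ 2 / ΛminI ^ 2 := by
        rw [hB, div_pow, mul_pow, Real.sq_sqrt (by positivity)]
      rw [hκsq, hB2, div_mul_eq_mul_div,
        div_le_div_iff₀ hΛminI (by positivity : (0:ℝ) < ΛminI ^ 2)]
      have hle := hΛle hIne
      have hK : (0:ℝ) ≤ (I.card : ℝ) * lamnoise ^ 2 * (n : ℝ) * ΛminI := by positivity
      nlinarith [mul_le_mul_of_nonneg_left hle hK]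
  -- r2 ≤ (A+B)² n
  have hr2final : r2 ≤ (A + B) ^ 2 * n := by
    calc r2 ≤ b2 + κ ^ 2 := hr2bound
      _ ≤ A ^ 2 * n + B ^ 2 * n := add_le_add hb2le hκsqle
      _ ≤ (A + B) ^ 2 * n := by nlinarith [mul_nonneg hAnonneg hBnonneg]
  have hgoal1 : Real.sqrt r2 / Real.sqrt (n : ℝ) ≤ A + B := by
    rw [div_le_iff₀ (Real.sqrt_pos.2 hn')]
    calc Real.sqrt r2 ≤ Real.sqrt ((A + B) ^ 2 * n) := Real.sqrt_le_sqrt hr2final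
      _ = (A + B) * Real.sqrt n := by
          rw [Real.sqrt_mul (sq_nonneg _), Real.sqrt_sq (by linarith)]
  refine ⟨hgoal1, ?_⟩
  -- second bound
  have hAle : A ≤ Real.sqrt Λmaxs * C * (lam * σ * Real.sqrt (s0 : ℝ)) := by
    rw [hA]
    calc Real.sqrt Λmaxs * Real.sqrt (∑ j ∈ Iᶜ, (β j) ^ 2) ≤
        Real.sqrt Λmaxs * (C * Real.sqrt (s0 : ℝ) * lam * σ) := by
          apply mul_le_mul_of_nonneg_left hβD (Real.sqrt_nonneg _)
      _ = Real.sqrt Λmaxs * C * (lam * σ * Real.sqrt (s0 : ℝ)) := by ring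
  have hBle : B ≤ Real.sqrt (2 * (1 + a) * ΛmaxI) / ΛminI * (lam * σ * Real.sqrt (s0 : ℝ)) := by
    rw [hB]
    rcases Finset.eq_empty_or_nonempty I with hIe | hIne
    · rw [hIe]
      simp only [Finset.card_empty, Nat.cast_zero, zero_mul, Real.sqrt_zero, zero_div]
      positivity
    · have hmaxpos : 0 < ΛmaxI := lt_of_lt_of_le hΛminI (hΛle hIne)
      rw [hlamnoise, div_mul_eq_mul_div, div_le_div_iff₀ hΛminI hΛminI]
      apply mul_le_mul_of_nonneg_right _ hΛminI.le
      have key : Real.sqrt ((I.card : ℝ) * ΛmaxI) * Real.sqrt (1 + a) ≤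
          Real.sqrt (2 * (1 + a) * ΛmaxI) * Real.sqrt (s0 : ℝ) := by
        rw [← Real.sqrt_mul (by positivity), ← Real.sqrt_mul (by positivity)]
        apply Real.sqrt_le_sqrt
        have hc : (I.card : ℝ) ≤ 2 * s0 := by exact_mod_cast hIcard
        calc (I.card : ℝ) * ΛmaxI * (1 + a) ≤ 2 * s0 * ΛmaxI * (1 + a) := by
              apply mul_le_mul_of_nonneg_right _ (by linarith)
              exact mul_le_mul_of_nonneg_right hc hmaxpos.le
          _ = 2 * (1 + a) * ΛmaxI * s0 := by ring
      calc Real.sqrt ((I.card : ℝ) * ΛmaxI) * (Real.sqrt (1 + a) * lam * σ) =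
          (Real.sqrt ((I.card : ℝ) * ΛmaxI) * Real.sqrt (1 + a)) * (lam * σ) := by ring
        _ ≤ (Real.sqrt (2 * (1 + a) * ΛmaxI) * Real.sqrt (s0 : ℝ)) * (lam * σ) := by
            apply mul_le_mul_of_nonneg_right key (by positivity)
        _ = Real.sqrt (2 * (1 + a) * ΛmaxI) * (lam * σ * Real.sqrt (s0 : ℝ)) := by ring
  calc Real.sqrt r2 / Real.sqrt (n : ℝ) ≤ A + B := hgoal1
    _ ≤ Real.sqrt Λmaxs * C * (lam * σ * Real.sqrt (s0 : ℝ)) +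
        Real.sqrt (2 * (1 + a) * ΛmaxI) / ΛminI * (lam * σ * Real.sqrt (s0 : ℝ)) :=
        add_le_add hAle hBle
    _ = (Real.sqrt Λmaxs * C + Real.sqrt (2 * (1 + a) * ΛmaxI) / ΛminI) *
        lam * σ * Real.sqrt (s0 : ℝ) := by ring
end

section
/- Projection-noise bound: if ‖Xᵀε/n‖_∞ ≤ λ_{σ,a,p}, X_IᵀX_I is invertible with eigenvalues of X_IᵀX_I/n in [Λ_min(|I|), Λ_max(|I|)], then ‖X_I(X_IᵀX_I)^{-1}X_Iᵀε‖₂/√n ≤ √(Λ_max(|I|))·√|I|·λ_{σ,a,p}/Λ_min(|I|). -/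
/-- Projection-noise bound: the norm of the projection of the noise onto the
column space of X_I. -/
theorem stmt15 (n p : ℕ) (hn : 0 < n) (X : Matrix (Fin n) (Fin p) ℝ)
    (ε : Fin n → ℝ) (I : Finset (Fin p)) (ΛminI ΛmaxI lam : ℝ)
    (hΛminI : 0 < ΛminI) (hlam : 0 < lam)
    (hIRE : ∀ v : Fin p → ℝ, (∀ j ∉ I, v j = 0) →
      ΛminI * n * (∑ j, (v j) ^ 2) ≤ ∑ i, (X.mulVec v i) ^ 2 ∧
      ∑ i, (X.mulVec v i) ^ 2 ≤ ΛmaxI * n * (∑ j, (v j) ^ 2))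
    (hnoise : ∀ j, |∑ i, X i j * ε i| / n ≤ lam)
    (c : Fin p → ℝ) (hc : ∀ j ∉ I, c j = 0)
    (hnormal : ∀ j ∈ I, ∑ i, X i j * (X.mulVec c i - ε i) = 0) :
    Real.sqrt (∑ i, (X.mulVec c i) ^ 2) / Real.sqrt (n : ℝ) ≤
      Real.sqrt ΛmaxI * Real.sqrt (I.card : ℝ) * lam / ΛminI := by
  set u := X.mulVec c with hu
  set A := ∑ i, (u i) ^ 2 with hA
  set C := ∑ j, (c j) ^ 2 with hC
  obtain ⟨h1, h2⟩ := hIRE c hc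
  have hA0 : 0 ≤ A := Finset.sum_nonneg fun i _ => sq_nonneg _
  have hC0 : 0 ≤ C := Finset.sum_nonneg fun j _ => sq_nonneg _
  have hnpos : (0:ℝ) < n := by exact_mod_cast hn
  have hRHS0 : 0 ≤ Real.sqrt ΛmaxI * Real.sqrt (I.card : ℝ) * lam / ΛminI := by
    positivity
  by_cases hAz : A = 0
  · rw [hAz, Real.sqrt_zero, zero_div]
    exact hRHS0
  have hApos : 0 < A := lt_of_le_of_ne hA0 (Ne.symm hAz)
  -- key identity
  have e3 : ∀ j ∈ I, ∑ i, X i j * u i = ∑ i, X i j * ε i := by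
    intro j hj
    have h := hnormal j hj
    simp only [mul_sub, Finset.sum_sub_distrib] at h
    linarith
  have key : A = ∑ j ∈ I, c j * ∑ i, X i j * ε i := by
    calc A = ∑ i, ∑ j, u i * (X i j * c j) := by
            refine Finset.sum_congr rfl fun i _ => ?_
            rw [pow_two, ← Finset.mul_sum]
            congr 1
      _ = ∑ j, ∑ i, u i * (X i j * c j) := Finset.sum_comm
      _ = ∑ j, c j * ∑ i, X i j * u i := by
            refine Finset.sum_congr rfl fun j _ => ?_
            rw [Finset.mul_sum]; exact Finset.sum_congr rfl fun i _ => by ring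
      _ = ∑ j ∈ I, c j * ∑ i, X i j * u i :=
            (Finset.sum_subset I.subset_univ
              (fun j _ hj => by rw [hc j hj, zero_mul])).symm
      _ = ∑ j ∈ I, c j * ∑ i, X i j * ε i :=
            Finset.sum_congr rfl fun j hj => by rw [e3 j hj]
  have hT : ∀ j, |∑ i, X i j * ε i| ≤ n * lam := fun j => by
    have h := hnoise j
    rw [div_le_iff₀ hnpos] at h
    linarith
  have h1' : ΛminI * n * C ≤ A := h1
  have h2' : A ≤ ΛmaxI * n * C := h2
  have b1 : A ≤ (∑ j ∈ I, |c j|) * (n * lam) := by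
    rw [key]
    calc ∑ j ∈ I, c j * ∑ i, X i j * ε i
        ≤ ∑ j ∈ I, |c j| * (n * lam) := by
          refine Finset.sum_le_sum fun j hj => ?_
          calc c j * ∑ i, X i j * ε i ≤ |c j * ∑ i, X i j * ε i| := le_abs_self _
            _ = |c j| * |∑ i, X i j * ε i| := abs_mul _ _
            _ ≤ |c j| * (n * lam) := mul_le_mul_of_nonneg_left (hT j) (abs_nonneg _)
      _ = (∑ j ∈ I, |c j|) * (n * lam) := (Finset.sum_mul _ _ _).symm
  have cs : (∑ j ∈ I, |c j|) ^ 2 ≤ (I.card : ℝ) * C := by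
    have h := Finset.sum_mul_sq_le_sq_mul_sq I (fun _ => (1:ℝ)) (fun j => |c j|)
    simp only [one_pow, one_mul, sq_abs, Finset.sum_const, nsmul_eq_mul, mul_one] at h
    have hsub : ∑ j ∈ I, (c j) ^ 2 ≤ C :=
      Finset.sum_le_univ_sum_of_nonneg fun j => sq_nonneg _
    calc (∑ j ∈ I, |c j|) ^ 2 ≤ (I.card : ℝ) * ∑ j ∈ I, (c j) ^ 2 := h
      _ ≤ (I.card : ℝ) * C := mul_le_mul_of_nonneg_left hsub (Nat.cast_nonneg _)
  have hsum0 : 0 ≤ ∑ j ∈ I, |c j| := Finset.sum_nonneg fun j _ => abs_nonneg _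
  have hA2 : A ^ 2 ≤ (I.card : ℝ) * C * (n * lam) ^ 2 := by
    nlinarith [b1, cs, hA0, mul_nonneg hsum0 (le_of_lt (mul_pos hnpos hlam))]
  have hCpos : 0 < C := by
    by_contra h
    push_neg at h
    have h3 : (I.card : ℝ) * C ≤ 0 :=
      mul_nonpos_of_nonneg_of_nonpos (Nat.cast_nonneg _) h
    have h4 : (I.card : ℝ) * C * (n * lam) ^ 2 ≤ 0 :=
      mul_nonpos_of_nonpos_of_nonneg h3 (sq_nonneg _)
    nlinarith [hA2, pow_pos hApos 2]
  have hmm : ΛminI ≤ ΛmaxI := by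
    nlinarith [h1', h2', mul_pos hnpos hCpos]
  have hAle : A * ΛminI ≤ (I.card : ℝ) * n * lam ^ 2 := by
    nlinarith [hA2, mul_le_mul_of_nonneg_left h1' hA0, hApos,
      mul_pos hnpos hCpos]
  have hfin : A / n ≤ (Real.sqrt ΛmaxI * Real.sqrt (I.card : ℝ) * lam / ΛminI) ^ 2 := by
    have hΛmax0 : 0 ≤ ΛmaxI := le_trans hΛminI.le hmm
    have hsq : (Real.sqrt ΛmaxI * Real.sqrt (I.card : ℝ) * lam / ΛminI) ^ 2
        = ΛmaxI * (I.card : ℝ) * lam ^ 2 / ΛminI ^ 2 := by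
      rw [div_pow, mul_pow, mul_pow, Real.sq_sqrt hΛmax0,
        Real.sq_sqrt (Nat.cast_nonneg _)]
    rw [hsq, div_le_div_iff₀ hnpos (by positivity)]
    calc A * ΛminI ^ 2 = (A * ΛminI) * ΛminI := by ring
      _ ≤ ((I.card : ℝ) * n * lam ^ 2) * ΛminI :=
          mul_le_mul_of_nonneg_right hAle hΛminI.le
      _ ≤ ((I.card : ℝ) * n * lam ^ 2) * ΛmaxI :=
          mul_le_mul_of_nonneg_left hmm (by positivity)
      _ = ΛmaxI * (I.card : ℝ) * lam ^ 2 * n := by ring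
  calc Real.sqrt A / Real.sqrt (n : ℝ)
      = Real.sqrt (A / n) := (Real.sqrt_div hA0 _).symm
    _ ≤ Real.sqrt ((Real.sqrt ΛmaxI * Real.sqrt (I.card : ℝ) * lam / ΛminI) ^ 2) :=
        Real.sqrt_le_sqrt hfin
    _ = Real.sqrt ΛmaxI * Real.sqrt (I.card : ℝ) * lam / ΛminI :=
        Real.sqrt_sq hRHS0
end

section
/- Second-stage false positive bound: if β̂^{(1)} satisfies ‖β̂^{(1)} − β‖₂ ≤ λ_{σ,a,p}√s_1/Λ_min(s_1) where s_1 = |Ŝ_1| and supp(β) ⊆ Ŝ_1, and Ŝ_2 = {j ∈ Ŝ_1 : |β̂^{(1)}_j| ≥ 4λ_n√s_1} with λ_n ≥ B·λ_{σ,a,p}, then |Ŝ_2 \ S| ≤ 1/(16 B² Λ_min(s_1)²). -/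
set_option maxHeartbeats 1000000 in
/-- Second-stage false positive bound. -/
theorem stmt18 (p : ℕ) (β b1 : Fin p → ℝ)
    (S S1 : Finset (Fin p)) (hS : ∀ j, j ∈ S ↔ β j ≠ 0) (hSsub : S ⊆ S1)
    (hb1supp : ∀ j ∉ S1, b1 j = 0)
    (B lamn lam Λmin : ℝ) (hB : 1 ≤ B) (hlam : 0 < lam)
    (hlamn : B * lam ≤ lamn) (hΛmin : 0 < Λmin)
    (hloss : Real.sqrt (∑ j, (b1 j - β j) ^ 2) ≤
      lam * Real.sqrt (S1.card : ℝ) / Λmin)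
    (S2 : Finset (Fin p))
    (hS2 : ∀ j, j ∈ S2 ↔ (j ∈ S1 ∧ 4 * lamn * Real.sqrt (S1.card : ℝ) ≤ |b1 j|)) :
    ((S2 \ S).card : ℝ) ≤ 1 / (16 * B ^ 2 * Λmin ^ 2) := by
  set s1 : ℝ := (S1.card : ℝ) with hs1
  by_cases hS1 : S1 = ∅
  · have : S2 = ∅ := by
      ext j
      simp only [Finset.notMem_empty, iff_false]
      intro hj
      exact absurd ((hS2 j).mp hj).1 (by simp [hS1])
    simp [this]
    positivity
  have hs1pos : (0:ℝ) < s1 := by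
    have : 0 < S1.card := Finset.card_pos.mpr (Finset.nonempty_iff_ne_empty.mpr hS1)
    rw [hs1]; exact_mod_cast this
  have hsq : 0 < Real.sqrt s1 := Real.sqrt_pos.mpr hs1pos
  have hsqsq : Real.sqrt s1 ^ 2 = s1 := Real.sq_sqrt hs1pos.le
  have hlamn_pos : 0 < lamn := lt_of_lt_of_le (by nlinarith) hlamn
  have hsum_nonneg : (0:ℝ) ≤ ∑ j, (b1 j - β j) ^ 2 :=
    Finset.sum_nonneg fun j _ => sq_nonneg _
  have hloss2 : ∑ j, (b1 j - β j) ^ 2 ≤ (lam * Real.sqrt s1 / Λmin) ^ 2 := by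
    have h1 : Real.sqrt (∑ j, (b1 j - β j) ^ 2) ^ 2 ≤ (lam * Real.sqrt s1 / Λmin) ^ 2 :=
      pow_le_pow_left₀ (Real.sqrt_nonneg _) hloss 2
    rwa [Real.sq_sqrt hsum_nonneg] at h1
  have hlb : ((S2 \ S).card : ℝ) * (4 * lamn * Real.sqrt s1) ^ 2 ≤ ∑ j, (b1 j - β j) ^ 2 := by
    have h1 : ∑ j ∈ S2 \ S, (b1 j - β j) ^ 2 ≤ ∑ j, (b1 j - β j) ^ 2 :=
      Finset.sum_le_sum_of_subset_of_nonneg (Finset.subset_univ _)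
        (fun j _ _ => sq_nonneg _)
    refine le_trans ?_ h1
    have h2 : ∀ j ∈ S2 \ S, (4 * lamn * Real.sqrt s1) ^ 2 ≤ (b1 j - β j) ^ 2 := by
      intro j hj
      rw [Finset.mem_sdiff] at hj
      have hβ : β j = 0 := by
        by_contra h
        exact hj.2 ((hS j).mpr h)
      have hb : 4 * lamn * Real.sqrt s1 ≤ |b1 j| := ((hS2 j).mp hj.1).2
      rw [hβ, sub_zero, ← sq_abs (b1 j)]
      exact pow_le_pow_left₀ (by positivity) hb 2
    calc ((S2 \ S).card : ℝ) * (4 * lamn * Real.sqrt s1) ^ 2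
        = ∑ _j ∈ S2 \ S, (4 * lamn * Real.sqrt s1) ^ 2 := by
          rw [Finset.sum_const, nsmul_eq_mul]
      _ ≤ ∑ j ∈ S2 \ S, (b1 j - β j) ^ 2 := Finset.sum_le_sum h2
  have hkey : ((S2 \ S).card : ℝ) * (4 * lamn * Real.sqrt s1) ^ 2 ≤
      (lam * Real.sqrt s1 / Λmin) ^ 2 := le_trans hlb hloss2
  have hBlam : (4 * (B * lam) * Real.sqrt s1) ^ 2 ≤ (4 * lamn * Real.sqrt s1) ^ 2 := by
    apply pow_le_pow_left₀ (by positivity)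
    have : 0 < Real.sqrt s1 := hsq
    nlinarith [hsq.le]
  have hcard : (0:ℝ) ≤ ((S2 \ S).card : ℝ) := Nat.cast_nonneg _
  have hkey2 : ((S2 \ S).card : ℝ) * (16 * B ^ 2 * lam ^ 2 * s1) ≤
      lam ^ 2 * s1 / Λmin ^ 2 := by
    have e1 : (4 * (B * lam) * Real.sqrt s1) ^ 2 = 16 * B ^ 2 * lam ^ 2 * s1 := by
      ring_nf; nlinarith [hsqsq]
    have e2 : (lam * Real.sqrt s1 / Λmin) ^ 2 = lam ^ 2 * s1 / Λmin ^ 2 := by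
      field_simp; nlinarith [hsqsq]
    calc ((S2 \ S).card : ℝ) * (16 * B ^ 2 * lam ^ 2 * s1)
        = ((S2 \ S).card : ℝ) * (4 * (B * lam) * Real.sqrt s1) ^ 2 := by rw [e1]
      _ ≤ ((S2 \ S).card : ℝ) * (4 * lamn * Real.sqrt s1) ^ 2 :=
          mul_le_mul_of_nonneg_left hBlam hcard
      _ ≤ (lam * Real.sqrt s1 / Λmin) ^ 2 := hkey
      _ = lam ^ 2 * s1 / Λmin ^ 2 := e2
  rw [le_div_iff₀ (by positivity)]
  have h := mul_le_mul_of_nonneg_right hkey2 (by positivity : (0:ℝ) ≤ Λmin ^ 2)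
  have h2 : lam ^ 2 * s1 / Λmin ^ 2 * Λmin ^ 2 = lam ^ 2 * s1 := by field_simp
  rw [h2] at h
  have hpos : 0 < lam ^ 2 * s1 := by positivity
  nlinarith [h, hpos]
end
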